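/- arXiv:2110.11643 — 7 statements merged into one kernel-verified Lean document; each statement's English description precedes it below -/
import Mathlib

section
/- Let k ≥ 0 be an integer and let f : ℝ → ℝ be (k+2)-times continuously differentiable on the interval [0,1]. Then ∫₀¹ x^k f({1/x}) dx = (1/(k+1)!) · ( Σ_{j=0}^{k} (k−j)! · ( f^{(j)}(0)·α_{k−j} − f^{(j)}(1)·(α_{k−j} − 1) ) + ∫₀¹ f^{(k+2)}(x) · log Γ(x+1) dx ), where α_0 = γ (the Euler–Mascheroni constant) and α_n = ζ(n+1) for n > 0, with ζ the Riemann zeta function. -/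
open MeasureTheory Real Set Filter Topology

noncomputable section
namespace FMF

local notation "γ" => Real.eulerMascheroniConstant

def T : Set ℝ := Set.Ioo (-(1/2) : ℝ) 2

lemma isOpen_T : IsOpen T := isOpen_Ioo
lemma preconnected_T : IsPreconnected T := (convex_Ioo _ _).isPreconnected
lemma zero_mem_T : (0:ℝ) ∈ T := by constructor <;> norm_num
lemma Icc_subset_T : Set.Icc (0:ℝ) 1 ⊆ T := fun x hx => ⟨by linarith [hx.1], by linarith [hx.2]⟩

lemma shift_pos {x : ℝ} (hx : x ∈ T) (n : ℕ) : (0:ℝ) < x + (n + 1) := by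
  have h1 := hx.1
  have : (0:ℝ) ≤ n := n.cast_nonneg
  replace h1 : -(1/2:ℝ) < x := h1
  linarith

lemma shift_ge {x : ℝ} (hx : x ∈ T) (n : ℕ) : ((n:ℝ) + 1/2) ≤ x + (n + 1) := by
  have h1 := hx.1
  replace h1 : -(1/2:ℝ) < x := h1
  linarith

lemma half_add_pos (n : ℕ) : (0:ℝ) < (n:ℝ) + 1/2 := by positivity

/-- auxiliary summability -/
lemma summable_half (m : ℕ) (hm : 2 ≤ m) :
    Summable (fun n : ℕ => ((n:ℝ) + 1/2) ^ (-(m:ℤ))) := by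
  rw [← summable_nat_add_iff 1]
  have h2 : Summable (fun n : ℕ => 1 / ((n:ℝ)+1) ^ 2) := by
    have := (summable_nat_add_iff (f := fun n : ℕ => 1 / (n:ℝ) ^ 2) 1).2 ?_
    · exact_mod_cast this
    · exact summable_one_div_nat_pow.2 one_lt_two
  apply h2.of_nonneg_of_le (fun n => by positivity)
  intro n
  have e1 : (1:ℝ)/((n:ℝ)+1)^2 = (((n:ℝ)+1)^2)⁻¹ := one_div _
  rw [zpow_neg, zpow_natCast, e1]
  apply inv_anti₀ (by positivity)
  calc ((n:ℝ)+1)^2 ≤ ((n:ℝ)+1)^m := by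
        apply pow_le_pow_right₀ (by linarith [n.cast_nonneg (α := ℝ)]) hm
    _ ≤ (((n:ℕ)+1:ℝ) + 1/2)^m := by
        apply pow_le_pow_left₀ (by positivity) (by push_cast; linarith)
    _ = (((n+1:ℕ):ℝ) + 1/2)^m := by push_cast; ring

def psi (x : ℝ) : ℝ := deriv (Real.log ∘ Real.Gamma) x

lemma diff_logGamma {x : ℝ} (hx : 0 < x) : DifferentiableAt ℝ (Real.log ∘ Real.Gamma) x := by
  refine (Real.differentiableAt_Gamma ?_).log (Real.Gamma_ne_zero ?_) <;>
    exact fun m => ne_of_gt (by have : (0:ℝ) ≤ m := m.cast_nonneg; linarith)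

lemma hasDerivAt_logGamma {x : ℝ} (hx : 0 < x) :
    HasDerivAt (Real.log ∘ Real.Gamma) (psi x) x := (diff_logGamma hx).hasDerivAt

lemma logGamma_rec {x : ℝ} (hx : 0 < x) :
    (Real.log ∘ Real.Gamma) (x + 1) = (Real.log ∘ Real.Gamma) x + Real.log x := by
  simp only [Function.comp_apply, Real.Gamma_add_one hx.ne',
    Real.log_mul hx.ne' (Real.Gamma_pos_of_pos hx).ne', add_comm]

lemma psi_rec {x : ℝ} (hx : 0 < x) : psi (x + 1) = psi x + 1 / x := by
  simp only [psi]
  rw [← deriv_comp_add_const, one_div, ← Real.deriv_log,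
    ← deriv_add (diff_logGamma hx) (Real.differentiableAt_log hx.ne')]
  apply Filter.EventuallyEq.deriv_eq
  filter_upwards [eventually_gt_nhds hx] with y hy using logGamma_rec hy

lemma psi_lb {y : ℝ} (hy : 1 < y) : Real.log (y - 1) ≤ psi y := by
  have h0 : (0:ℝ) < y := by linarith
  have h1 : (0:ℝ) < y - 1 := by linarith
  have h := Real.convexOn_log_Gamma.slope_le_deriv (Set.mem_Ioi.2 h1) (Set.mem_Ioi.2 h0)
    (by linarith) (diff_logGamma h0)
  have e := logGamma_rec h1
  rw [sub_add_cancel] at e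
  rw [slope_def_field, e, show y - (y - 1) = (1:ℝ) by ring, div_one, add_sub_cancel_left] at h
  exact h

lemma psi_ub {y : ℝ} (hy : 0 < y) : psi y ≤ Real.log y := by
  have h := Real.convexOn_log_Gamma.deriv_le_slope (Set.mem_Ioi.2 hy)
    (Set.mem_Ioi.2 (by linarith : (0:ℝ) < y + 1)) (by linarith) (diff_logGamma hy)
  rw [slope_def_field, show y + 1 - y = (1:ℝ) by ring, div_one, logGamma_rec hy,
    add_sub_cancel_left] at h
  exact h

/-- term of the polygamma-type series -/
def sterm (m : ℕ) (n : ℕ) (x : ℝ) : ℝ := (x + ((n:ℝ) + 1)) ^ (-(m:ℤ))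

def Sser (m : ℕ) (x : ℝ) : ℝ := ∑' n : ℕ, sterm m n x

lemma hasDerivAt_sterm (m : ℕ) (n : ℕ) {x : ℝ} (hx : 0 < x + ((n:ℝ)+1)) :
    HasDerivAt (sterm m n) ((-(m:ℤ)) * sterm (m+1) n x) x := by
  have h := (hasDerivAt_zpow (-(m:ℤ)) (x + ((n:ℝ)+1)) (Or.inl hx.ne')).comp_add_const x _
  have e : (-(m:ℤ)) - 1 = -((m:ℕ)+1:ℤ) := by push_cast; ring
  rw [e] at h
  refine h.congr_deriv ?_
  simp [sterm]

lemma sterm_nonneg (m n : ℕ) {x : ℝ} (hx : 0 < x + ((n:ℝ)+1)) : 0 < sterm m n x :=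
  zpow_pos hx _

lemma sterm_bound (m : ℕ) (n : ℕ) {x : ℝ} (hx : x ∈ T) :
    |sterm m n x| ≤ ((n:ℝ) + 1/2) ^ (-(m:ℤ)) := by
  rw [abs_of_pos (sterm_nonneg m n (shift_pos hx n))]
  rw [sterm, zpow_neg, zpow_neg, zpow_natCast, zpow_natCast]
  exact inv_anti₀ (by positivity) (pow_le_pow_left₀ (le_of_lt (half_add_pos n)) (shift_ge hx n) m)

lemma summable_sterm (m : ℕ) (hm : 2 ≤ m) {x : ℝ} (hx : x ∈ T) :
    Summable (fun n => sterm m n x) := by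
  apply Summable.of_norm
  exact (summable_half m hm).of_nonneg_of_le (fun n => norm_nonneg _)
    (fun n => sterm_bound m n hx)

/-- derivative of `Sser m` for `m ≥ 2` -/
lemma hasDerivAt_Sser (m : ℕ) (hm : 2 ≤ m) {x : ℝ} (hx : x ∈ T) :
    HasDerivAt (Sser m) ((-(m:ℤ)) * Sser (m+1) x) x := by
  have h := hasDerivAt_tsum_of_isPreconnected
    (u := fun n : ℕ => (m:ℝ) * ((n:ℝ) + 1/2) ^ (-((m:ℕ)+1:ℤ)))
    (g := fun n : ℕ => sterm m n) (g' := fun n x => (-(m:ℤ)) * sterm (m+1) n x)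
    (((summable_half (m+1) (by omega)).mul_left _))
    isOpen_T preconnected_T
    (fun n y hy => hasDerivAt_sterm m n (shift_pos hy n))
    (fun n y hy => ?_) zero_mem_T (summable_sterm m hm zero_mem_T) hx
  · simp only [tsum_mul_left] at h
    exact h
  · rw [norm_mul]
    push_cast
    gcongr
    · simp
    · exact sterm_bound (m+1) n hy

def dterm (n : ℕ) (x : ℝ) : ℝ := 1/((n:ℝ)+1) - 1/(x+((n:ℝ)+1))
def dser (x : ℝ) : ℝ := ∑' n : ℕ, dterm n x

lemma sterm_one (n : ℕ) (x : ℝ) : sterm 1 n x = 1/(x+((n:ℝ)+1)) := by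
  simp [sterm, one_div]

lemma hasDerivAt_dterm (n : ℕ) {x : ℝ} (hx : 0 < x + ((n:ℝ)+1)) :
    HasDerivAt (dterm n) (sterm 2 n x) x := by
  have h := (hasDerivAt_const x (1/((n:ℝ)+1))).sub (hasDerivAt_sterm 1 n hx)
  have h2 : HasDerivAt (fun y => 1/((n:ℝ)+1) - sterm 1 n y) (sterm 2 n x) x := by
    refine h.congr_deriv ?_
    push_cast; ring
  apply h2.congr_of_eventuallyEq
  filter_upwards with y using by rw [dterm, sterm_one]

lemma dterm_zero (n : ℕ) : dterm n 0 = 0 := by simp [dterm]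

lemma summable_dterm {x : ℝ} (hx : x ∈ T) : Summable (fun n => dterm n x) := by
  apply summable_of_summable_hasDerivAt_of_isPreconnected
    (u := fun n : ℕ => ((n:ℝ) + 1/2) ^ (-(2:ℕ):ℤ)) (summable_half 2 le_rfl)
    isOpen_T preconnected_T (fun n y hy => hasDerivAt_dterm n (shift_pos hy n))
    (fun n y hy => sterm_bound 2 n hy) zero_mem_T _ hx
  simp only [dterm_zero]
  exact summable_zero

lemma hasDerivAt_dser {x : ℝ} (hx : x ∈ T) : HasDerivAt dser (Sser 2 x) x := by
  have h := hasDerivAt_tsum_of_isPreconnected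
    (u := fun n : ℕ => ((n:ℝ) + 1/2) ^ (-(2:ℕ):ℤ)) (summable_half 2 le_rfl)
    isOpen_T preconnected_T (fun n y hy => hasDerivAt_dterm n (shift_pos hy n))
    (fun n y hy => sterm_bound 2 n hy) zero_mem_T (by
      simp only [dterm_zero]; exact summable_zero) hx
  exact h

lemma psi_add_pos {x : ℝ} (hx : x ∈ T) (r : ℝ) (hr : 0 ≤ r) : 0 < x + 1 + r := by
  have : -(1/2:ℝ) < x := hx.1; linarith

lemma psi_shift {x : ℝ} (hx : x ∈ T) (N : ℕ) :
    psi (x + 1 + N) = psi (x + 1) + ∑ i ∈ Finset.range N, 1/(x + 1 + i) := by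
  induction N with
  | zero => simp
  | succ N ih =>
    have h1 : x + 1 + (N+1:ℕ) = (x + 1 + N) + 1 := by push_cast; ring
    rw [h1, psi_rec (psi_add_pos hx N N.cast_nonneg), ih, Finset.sum_range_succ]
    ring

lemma psi_eq_dser {x : ℝ} (hx : x ∈ T) : psi (x + 1) = -γ + dser x := by
  -- the constant sequence identity
  have key : ∀ N : ℕ, psi (x + 1) =
      (psi (x + 1 + N) - Real.log N) - ((harmonic N : ℝ) - Real.log N)
        + ∑ i ∈ Finset.range N, dterm i x := by
    intro N
    have h1 := psi_shift hx N
    have h2 : ∑ i ∈ Finset.range N, dterm i x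
        = (harmonic N : ℝ) - ∑ i ∈ Finset.range N, 1/(x + 1 + i) := by
      simp only [dterm, Finset.sum_sub_distrib, harmonic]
      push_cast
      congr 1
      · exact Finset.sum_congr rfl (fun i _ => one_div _)
      · exact Finset.sum_congr rfl (fun i _ => by ring)
    rw [h2, h1]; ring
  -- limits
  have l1 : Tendsto (fun N : ℕ => psi (x + 1 + N) - Real.log N) atTop (𝓝 0) := by
    have hxm : -(1/2:ℝ) < x := hx.1
    have hlow : Tendsto (fun N : ℕ => Real.log (x + N) - Real.log N) atTop (𝓝 0) := by
      have h0 : Tendsto (fun N : ℕ => x / N + 1) atTop (𝓝 1) := by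
        simpa using (tendsto_const_div_atTop_nhds_zero_nat x).add_const 1
      have := (Real.continuousAt_log one_ne_zero).tendsto.comp h0
      rw [Real.log_one] at this
      apply this.congr'
      filter_upwards [eventually_ge_atTop 1] with N hN
      have hN0 : (0:ℝ) < N := by exact_mod_cast hN
      have hN1 : (1:ℝ) ≤ N := by exact_mod_cast hN
      have hxN : (0:ℝ) < x + N := by linarith
      rw [Function.comp_apply, show x / N + 1 = (x + N) / N by field_simp,
        Real.log_div hxN.ne' hN0.ne']
    have hup : Tendsto (fun N : ℕ => Real.log (x + 1 + N) - Real.log N) atTop (𝓝 0) := by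
      have h0 : Tendsto (fun N : ℕ => (x+1) / N + 1) atTop (𝓝 1) := by
        simpa using (tendsto_const_div_atTop_nhds_zero_nat (x+1)).add_const 1
      have := (Real.continuousAt_log one_ne_zero).tendsto.comp h0
      rw [Real.log_one] at this
      apply this.congr'
      filter_upwards [eventually_ge_atTop 1] with N hN
      have hN0 : (0:ℝ) < N := by exact_mod_cast hN
      have hxN : (0:ℝ) < x + 1 + N := by linarith
      rw [Function.comp_apply, show (x+1) / N + 1 = (x + 1 + N) / N by field_simp,
        Real.log_div hxN.ne' hN0.ne']
    apply tendsto_of_tendsto_of_tendsto_of_le_of_le' hlow hup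
    · filter_upwards [eventually_ge_atTop 1] with N hN
      have hN1 : (1:ℝ) ≤ N := by exact_mod_cast hN
      have h1 : 1 < x + 1 + N := by linarith
      have := psi_lb h1
      have e : x + 1 + N - 1 = x + N := by ring
      rw [e] at this
      linarith
    · filter_upwards with N
      have := psi_ub (psi_add_pos hx N N.cast_nonneg)
      linarith
  have l2 := Real.tendsto_harmonic_sub_log
  have l3 := (summable_dterm hx).hasSum.tendsto_sum_nat
  have lall : Tendsto (fun N : ℕ => (psi (x + 1 + N) - Real.log N)
      - ((harmonic N : ℝ) - Real.log N) + ∑ i ∈ Finset.range N, dterm i x)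
      atTop (𝓝 (0 - γ + dser x)) := (l1.sub l2).add l3
  have lconst : Tendsto (fun _ : ℕ => psi (x + 1)) atTop (𝓝 (psi (x+1))) := tendsto_const_nhds
  have := tendsto_nhds_unique (lconst.congr (fun N => key N)) lall
  rw [this]; ring

def Gd : ℕ → ℝ → ℝ
  | 0 => fun x => Real.log (Real.Gamma (x+1))
  | 1 => fun x => psi (x+1)
  | (m+2) => fun x => (-1:ℝ)^(m+2) * (Nat.factorial (m+1)) * Sser (m+2) x

lemma hasDerivAt_Gd (m : ℕ) {x : ℝ} (hx : x ∈ T) : HasDerivAt (Gd m) (Gd (m+1) x) x := by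
  have hx1 : (0:ℝ) < x + 1 := by
    have : -(1/2:ℝ) < x := hx.1; linarith
  match m with
  | 0 =>
    exact (hasDerivAt_logGamma hx1).comp_add_const x 1
  | 1 =>
    have h := ((hasDerivAt_dser hx).const_add (-γ))
    have h2 : HasDerivAt (fun y => psi (y+1)) (Sser 2 x) x := by
      apply h.congr_of_eventuallyEq
      filter_upwards [isOpen_T.mem_nhds hx] with y hy using psi_eq_dser hy
    show HasDerivAt (fun y => psi (y+1)) (Gd 2 x) x
    convert h2 using 1
    show (-1:ℝ)^(0+2) * (Nat.factorial (0+1)) * Sser (0+2) x = Sser 2 x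
    norm_num
  | (m+2) =>
    have h := (hasDerivAt_Sser (m+2) (by omega) hx).const_mul
      ((-1:ℝ)^(m+2) * (Nat.factorial (m+1)))
    show HasDerivAt (fun y => (-1:ℝ)^(m+2) * (Nat.factorial (m+1)) * Sser (m+2) y)
      ((-1:ℝ)^(m+1+2) * (Nat.factorial (m+2)) * Sser (m+1+2) x) x
    refine h.congr_deriv (Eq.symm ?_)
    show (-1:ℝ)^(m+3) * (Nat.factorial (m+2)) * Sser (m+3) x
      = (-1:ℝ)^(m+2) * (Nat.factorial (m+1)) * ((-((m:ℕ)+2:ℤ)) * Sser (m+2+1) x)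
    rw [Nat.factorial_succ (m+1)]
    push_cast
    ring

lemma contOn_Gd (m : ℕ) : ContinuousOn (Gd m) (Set.Icc 0 1) :=
  fun x hx => ((hasDerivAt_Gd m (Icc_subset_T hx)).continuousAt).continuousWithinAt

lemma Gamma_two' : Real.Gamma 2 = 1 := by
  rw [show (2:ℝ) = 1 + 1 by norm_num, Real.Gamma_add_one one_ne_zero, Real.Gamma_one, mul_one]

lemma Gd0_zero : Gd 0 0 = 0 := by
  show Real.log (Real.Gamma (0+1)) = 0
  rw [zero_add, Real.Gamma_one, Real.log_one]

lemma Gd0_one : Gd 0 1 = 0 := by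
  show Real.log (Real.Gamma (1+1)) = 0
  rw [show (1:ℝ)+1 = 2 by norm_num, Gamma_two', Real.log_one]

lemma psi_one : psi 1 = -γ := by
  have h := (Real.hasDerivAt_Gamma_one).log (by rw [Real.Gamma_one]; exact one_ne_zero)
  rw [Real.Gamma_one, div_one] at h
  rw [psi, Function.comp_def]
  exact h.deriv

lemma Gd1_zero : Gd 1 0 = -γ := by
  show psi (0+1) = -γ
  rw [zero_add, psi_one]

lemma Gd1_one : Gd 1 1 = -(γ - 1) := by
  show psi (1+1) = -(γ - 1)
  rw [psi_rec one_pos, psi_one]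
  ring

lemma tsum_real_zeta (m : ℕ) (hm : 2 ≤ m) :
    ∑' n : ℕ, (((n:ℝ)+1) ^ m)⁻¹ = (riemannZeta ((m:ℕ):ℂ)).re := by
  have hre : 1 < ((m:ℕ):ℂ).re := by
    rw [Complex.natCast_re]
    exact_mod_cast (by omega : 1 < m)
  rw [zeta_eq_tsum_one_div_nat_add_one_cpow hre]
  have e : ∀ n : ℕ, (1:ℂ)/((n:ℂ)+1)^((m:ℕ):ℂ) = (((((n:ℝ)+1)^m)⁻¹ : ℝ) : ℂ) := by
    intro n
    rw [show ((n:ℂ)+1) = (((n+1:ℕ)):ℂ) by push_cast; ring, Complex.cpow_natCast]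
    push_cast
    rw [one_div]
  rw [tsum_congr e, ← Complex.ofReal_tsum, Complex.ofReal_re]

lemma sterm_zero_eq (m n : ℕ) : sterm m n 0 = (((n:ℝ)+1) ^ m)⁻¹ := by
  rw [sterm, zero_add, zpow_neg, zpow_natCast]

lemma summable_inv_pow (m : ℕ) (hm : 2 ≤ m) : Summable (fun n : ℕ => (((n:ℝ)+1) ^ m)⁻¹) :=
  (summable_sterm m hm zero_mem_T).congr (fun n => sterm_zero_eq m n)

lemma Sser_zero (m : ℕ) (hm : 2 ≤ m) : Sser m 0 = (riemannZeta ((m:ℕ):ℂ)).re := by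
  rw [Sser, tsum_congr (sterm_zero_eq m), tsum_real_zeta m hm]

lemma Sser_one (m : ℕ) (hm : 2 ≤ m) : Sser m 1 = (riemannZeta ((m:ℕ):ℂ)).re - 1 := by
  have h := Summable.tsum_eq_zero_add (summable_inv_pow m hm)
  rw [tsum_real_zeta m hm] at h
  have e : ∀ n : ℕ, (((((n+1:ℕ)):ℝ)+1) ^ m)⁻¹ = sterm m n 1 := by
    intro n
    rw [sterm, zpow_neg, zpow_natCast]
    push_cast
    ring_nf
  rw [tsum_congr e] at h
  have : ((((0:ℕ):ℝ))+1)^m = 1 := by norm_num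
  rw [this, inv_one] at h
  rw [Sser]
  linarith

lemma uniqueDiff01 : UniqueDiffOn ℝ (Set.Icc (0:ℝ) 1) := uniqueDiffOn_Icc one_pos

lemma F_contOn {k : ℕ} {f : ℝ → ℝ} (hf : ContDiffOn ℝ (k+2) f (Set.Icc 0 1))
    {j : ℕ} (hj : j ≤ k+2) :
    ContinuousOn (iteratedDerivWithin j f (Set.Icc 0 1)) (Set.Icc 0 1) :=
  hf.continuousOn_iteratedDerivWithin (by exact_mod_cast hj) uniqueDiff01

lemma F_hasDerivAt {k : ℕ} {f : ℝ → ℝ} (hf : ContDiffOn ℝ (k+2) f (Set.Icc 0 1))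
    {j : ℕ} (hj : j < k+2) {x : ℝ} (hx : x ∈ Set.Ioo (0:ℝ) 1) :
    HasDerivAt (iteratedDerivWithin j f (Set.Icc 0 1))
      (iteratedDerivWithin (j+1) f (Set.Icc 0 1) x) x := by
  have hd : DifferentiableOn ℝ (iteratedDerivWithin j f (Set.Icc 0 1)) (Set.Icc 0 1) :=
    hf.differentiableOn_iteratedDerivWithin (by exact_mod_cast hj) uniqueDiff01
  have hx' : x ∈ Set.Icc (0:ℝ) 1 := Set.Ioo_subset_Icc_self hx
  have h1 := (hd x hx').hasDerivWithinAt
  rw [iteratedDerivWithin_succ]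
  exact h1.hasDerivAt (Icc_mem_nhds hx.1 hx.2)

lemma ibp_chain (k : ℕ) (f : ℝ → ℝ) (hf : ContDiffOn ℝ (k+2) f (Set.Icc 0 1)) :
    ∀ j, j ≤ k+2 → (∫ x in (0:ℝ)..1, f x * Gd (k+2) x)
      = (∑ i ∈ Finset.range j, (-1:ℝ)^i *
          (iteratedDerivWithin i f (Set.Icc 0 1) 1 * Gd (k+1-i) 1
            - iteratedDerivWithin i f (Set.Icc 0 1) 0 * Gd (k+1-i) 0))
        + (-1:ℝ)^j * ∫ x in (0:ℝ)..1, iteratedDerivWithin j f (Set.Icc 0 1) x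
            * Gd (k+2-j) x := by
  intro j
  induction j with
  | zero =>
    intro _
    simp [iteratedDerivWithin_zero]
  | succ j ih =>
    intro hj
    have hj' : j ≤ k+2 := by omega
    have hjk : j < k+2 := by omega
    rw [ih hj']
    have e1 : k+2-j = (k+1-j)+1 := by omega
    have e2 : k+2-(j+1) = k+1-j := by omega
    rw [Finset.sum_range_succ, e1, e2]
    have hicc : Set.uIcc (0:ℝ) 1 = Set.Icc 0 1 := Set.uIcc_of_le (by norm_num)
    have hioo : Set.Ioo (min (0:ℝ) 1) (max 0 1) = Set.Ioo (0:ℝ) 1 := by norm_num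
    have key := intervalIntegral.integral_mul_deriv_eq_deriv_mul_of_hasDeriv_right
      (a := (0:ℝ)) (b := 1)
      (u := iteratedDerivWithin j f (Set.Icc 0 1)) (v := Gd (k+1-j))
      (u' := iteratedDerivWithin (j+1) f (Set.Icc 0 1)) (v' := Gd ((k+1-j)+1))
      (by rw [hicc]; exact F_contOn hf hj')
      (by rw [hicc]; exact contOn_Gd _)
      (by rw [hioo]; exact fun x hx => (F_hasDerivAt hf hjk hx).hasDerivWithinAt)
      (by rw [hioo]
          exact fun x hx =>
            (hasDerivAt_Gd _ (Icc_subset_T (Set.Ioo_subset_Icc_self hx))).hasDerivWithinAt)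
      (by apply ContinuousOn.intervalIntegrable; rw [hicc]; exact F_contOn hf (by omega))
      (by apply ContinuousOn.intervalIntegrable; rw [hicc]; exact contOn_Gd _)
    rw [key]
    ring

lemma lhs_eq (k : ℕ) (f : ℝ → ℝ) (hf : ContDiffOn ℝ (k+2) f (Set.Icc 0 1)) :
    (∫ x in (0:ℝ)..1, x ^ k * f (Int.fract (1/x)))
      = ∫ x in Set.Ioc (0:ℝ) 1, f x * Sser (k+2) x := by
  classical
  -- continuous extension of f
  set fc : ℝ → ℝ := fun y => f (max 0 (min y 1)) with hfcdef
  have hclamp : ∀ y : ℝ, max 0 (min y 1) ∈ Set.Icc (0:ℝ) 1 :=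
    fun y => ⟨le_max_left _ _, max_le zero_le_one (min_le_right y 1)⟩
  have hfc : Continuous fc := by
    apply hf.continuousOn.comp_continuous
    · exact continuous_const.max (continuous_id.min continuous_const)
    · exact hclamp
  have hfc_eq : ∀ y ∈ Set.Icc (0:ℝ) 1, fc y = f y := by
    intro y hy
    simp only [hfcdef]
    rw [min_eq_left hy.2, max_eq_right hy.1]
  have hfr : ∀ y : ℝ, fc (Int.fract y) = f (Int.fract y) :=
    fun y => hfc_eq _ ⟨Int.fract_nonneg y, (Int.fract_lt_one y).le⟩
  obtain ⟨C, hC⟩ := (isCompact_Icc (a := (0:ℝ)) (b := 1)).exists_bound_of_continuousOn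
    hfc.continuousOn
  have hC0 : 0 ≤ C := le_trans (norm_nonneg _) (hC 0 ⟨le_rfl, zero_le_one⟩)
  set h : ℝ → ℝ := fun x => x^k * fc (Int.fract (1/x)) with hhdef
  have hCfr : ∀ y : ℝ, ‖fc (Int.fract y)‖ ≤ C :=
    fun y => hC _ ⟨Int.fract_nonneg y, (Int.fract_lt_one y).le⟩
  have hhbd : ∀ x ∈ Set.Ioc (0:ℝ) 1, ‖h x‖ ≤ C := by
    intro x hx
    have : ‖h x‖ = |x|^k * ‖fc (Int.fract (1/x))‖ := by
      rw [hhdef]; simp [abs_mul, abs_pow]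
    rw [this]
    have h1 : |x|^k ≤ 1 := pow_le_one₀ (abs_nonneg x) (by rw [abs_of_pos hx.1]; exact hx.2)
    calc |x|^k * ‖fc (Int.fract (1/x))‖ ≤ 1 * C :=
          mul_le_mul h1 (hCfr _) (norm_nonneg _) zero_le_one
      _ = C := one_mul C
  have hmeas : Measurable h := by
    apply (measurable_id.pow_const k).mul
    exact hfc.measurable.comp (measurable_fract.comp (measurable_const.div measurable_id))
  have hint : IntegrableOn h (Set.Ioc (0:ℝ) 1) volume := by
    apply Measure.integrableOn_of_bounded (M := C) (by simp)
      hmeas.aestronglyMeasurable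
    rw [ae_restrict_iff' measurableSet_Ioc]
    exact Filter.Eventually.of_forall hhbd
  -- the subdivision points
  set a : ℕ → ℝ := fun n => ((n:ℝ)+1)⁻¹ with hadef
  have hapos : ∀ n : ℕ, 0 < a n := fun n => by positivity
  have hale1 : ∀ n : ℕ, a n ≤ 1 := fun n => by
    rw [hadef]
    apply inv_le_one_of_one_le₀
    have : (0:ℝ) ≤ n := n.cast_nonneg
    linarith
  have hamono : ∀ n : ℕ, a (n+1) ≤ a n := fun n => by
    apply inv_anti₀ (by positivity)
    push_cast
    linarith
  have hsubint : ∀ p q : ℝ, 0 < p → q ≤ 1 → p ≤ q → IntervalIntegrable h volume p q := by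
    intro p q hp hq hpq
    rw [intervalIntegrable_iff_integrableOn_Ioc_of_le hpq]
    exact hint.mono_set (fun x hx => ⟨lt_trans hp hx.1, le_trans hx.2 hq⟩)
  -- step 1 : substitution on each piece
  have hstep : ∀ n : ℕ, (∫ x in a (n+1)..a n, h x)
      = ∫ u in (0:ℝ)..1, fc u * sterm (k+2) n u := by
    intro n
    set c : ℝ := (n:ℝ)+1 with hcdef
    have hc1 : (1:ℝ) ≤ c := by rw [hcdef]; have : (0:ℝ) ≤ n := n.cast_nonneg; linarith
    have hcpos : (0:ℝ) < c := by linarith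
    have han : a n = c⁻¹ := rfl
    have han1 : a (n+1) = (c+1)⁻¹ := by rw [hadef, hcdef]; push_cast; ring_nf
    have hle : a (n+1) ≤ a n := hamono n
    set g : ℝ → ℝ := fun x => x^k * fc (1/x - c) with hgdef
    have e1 : (∫ x in a (n+1)..a n, h x) = ∫ x in a (n+1)..a n, g x := by
      rw [intervalIntegral.integral_of_le hle, intervalIntegral.integral_of_le hle]
      apply setIntegral_congr_fun measurableSet_Ioc
      intro x hx
      have hx0 : 0 < x := lt_trans (hapos (n+1)) hx.1
      have hfl : ⌊1/x⌋ = ((n:ℤ)+1) := by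
        rw [Int.floor_eq_iff]
        constructor
        · push_cast
          rw [show ((n:ℝ)+1) = c from rfl]
          rw [le_one_div hcpos hx0]
          rw [one_div]
          exact le_trans hx.2 (le_of_eq han)
        · push_cast
          rw [show ((n:ℝ)+1+1) = c+1 by rw [hcdef]]
          rw [div_lt_iff₀ hx0]
          have hxgt : (c+1)⁻¹ < x := by rw [← han1]; exact hx.1
          calc (1:ℝ) = (c+1) * (c+1)⁻¹ := by field_simp
            _ < (c+1) * x := by
                apply mul_lt_mul_of_pos_left hxgt (by linarith)
      show x ^ k * fc (Int.fract (1/x)) = x^k * fc (1/x - c)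
      rw [Int.fract, hfl]
      push_cast
      rfl
    set φ : ℝ → ℝ := fun u => (u + c)⁻¹ with hphidef
    have hphic : ∀ u ∈ Set.uIcc (0:ℝ) 1, 0 < u + c := by
      intro u hu
      rw [Set.uIcc_of_le (by norm_num : (0:ℝ) ≤ 1)] at hu
      linarith [hu.1]
    have hsub := intervalIntegral.integral_comp_mul_deriv'' (a := (0:ℝ)) (b := 1)
      (f := φ) (f' := fun u => -(1:ℝ)/(u+c)^2) (g := g)
      (by
        apply ContinuousOn.inv₀
        · exact (continuous_id.add continuous_const).continuousOn
        · exact fun u hu => (hphic u hu).ne')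
      (by
        intro x hx
        rw [show min (0:ℝ) 1 = 0 by norm_num, show max (0:ℝ) 1 = 1 by norm_num] at hx
        have hxc : 0 < x + c := by linarith [hx.1]
        have := ((hasDerivAt_id x).add_const c).inv hxc.ne'
        simp only [one_div, id_eq] at this ⊢
        exact (this.congr_deriv (by ring)).hasDerivWithinAt)
      (by
        apply ContinuousOn.div continuousOn_const
        · exact ((continuous_id.add continuous_const).pow 2).continuousOn
        · exact fun u hu => pow_ne_zero 2 (hphic u hu).ne')
      (by
        apply ContinuousOn.mono (s := Set.Ioi (0:ℝ))
        · apply ContinuousOn.mul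
          · exact (continuous_id.pow k).continuousOn
          · apply hfc.comp_continuousOn
            apply ContinuousOn.sub _ continuousOn_const
            exact continuousOn_const.div continuousOn_id (fun x hx => ne_of_gt hx)
        · rintro y ⟨u, hu, rfl⟩
          exact inv_pos.2 (hphic u hu))
    have hphi0 : φ 0 = a n := by rw [hphidef, han]; norm_num
    have hphi1 : φ 1 = a (n+1) := by
      show ((1:ℝ) + c)⁻¹ = a (n+1)
      rw [han1, add_comm]
    rw [e1, intervalIntegral.integral_symm, ← hphi0, ← hphi1, ← hsub,
      ← intervalIntegral.integral_neg]
    apply intervalIntegral.integral_congr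
    intro u hu
    have huc : 0 < u + c := hphic u hu
    show -((g ∘ φ) u * (-(1:ℝ)/(u+c)^2)) = fc u * sterm (k+2) n u
    have hphiu : (1:ℝ)/(φ u) - c = u := by
      rw [hphidef]
      field_simp
      ring
    simp only [Function.comp_apply, hgdef, hphiu, hphidef]
    rw [sterm, show ((n:ℝ)+1) = c from rfl, zpow_neg, zpow_natCast, inv_pow, pow_add, mul_inv,
      neg_div, one_div]
    simp only [one_div, inv_inv, add_sub_cancel_right]
    ring
  -- step 2 : partial sums
  have hIntSub : ∀ i : ℕ, IntervalIntegrable h volume (a i) (a (i+1)) :=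
    fun i => (hsubint (a (i+1)) (a i) (hapos _) (hale1 _) (hamono i)).symm
  have hpartial : ∀ N : ℕ, (∑ i ∈ Finset.range N, ∫ u in (0:ℝ)..1, fc u * sterm (k+2) i u)
      = ∫ x in a N..(1:ℝ), h x := by
    intro N
    have e : ∀ i : ℕ, (∫ u in (0:ℝ)..1, fc u * sterm (k+2) i u)
        = -∫ x in a i..a (i+1), h x := by
      intro i
      rw [← hstep i, intervalIntegral.integral_symm]
    rw [Finset.sum_congr rfl (fun i _ => e i), Finset.sum_neg_distrib,
      intervalIntegral.sum_integral_adjacent_intervals (fun i _ => hIntSub i),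
      ← intervalIntegral.integral_symm]
    congr 1
    rw [hadef]; norm_num
  -- step 3 : limit of truncations
  have hlim : Tendsto (fun N : ℕ => ∫ x in a N..(1:ℝ), h x) atTop
      (𝓝 (∫ x in (0:ℝ)..1, h x)) := by
    have hdecomp : ∀ N : ℕ, (∫ x in a N..(1:ℝ), h x)
        = (∫ x in (0:ℝ)..1, h x) - ∫ x in (0:ℝ)..a N, h x := by
      intro N
      have h1 : IntervalIntegrable h volume 0 (a N) := by
        rw [intervalIntegrable_iff_integrableOn_Ioc_of_le (hapos N).le]
        exact hint.mono_set (fun x hx => ⟨hx.1, le_trans hx.2 (hale1 N)⟩)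
      have h2 : IntervalIntegrable h volume (a N) 1 := hsubint _ _ (hapos N) le_rfl (hale1 N)
      rw [← intervalIntegral.integral_add_adjacent_intervals h1 h2]
      ring
    have hz : Tendsto (fun N : ℕ => ∫ x in (0:ℝ)..a N, h x) atTop (𝓝 0) := by
      have hbd : ∀ N : ℕ, ‖∫ x in (0:ℝ)..a N, h x‖ ≤ C * (1/((N:ℝ)+1)) := by
        intro N
        have hb := intervalIntegral.norm_integral_le_of_norm_le_const (C := C)
          (f := h) (a := 0) (b := a N) (by
            intro x hx
            rw [Set.uIoc_of_le (hapos N).le] at hx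
            exact hhbd x ⟨hx.1, le_trans hx.2 (hale1 N)⟩)
        calc ‖∫ x in (0:ℝ)..a N, h x‖ ≤ C * |a N - 0| := hb
          _ = C * (1/((N:ℝ)+1)) := by
              rw [sub_zero, abs_of_pos (hapos N), hadef, one_div]
      exact squeeze_zero_norm hbd
        (by simpa using tendsto_one_div_add_atTop_nhds_zero_nat.const_mul C)
    have := tendsto_const_nhds.sub hz (f := fun _ : ℕ => ∫ x in (0:ℝ)..1, h x)
    rw [sub_zero] at this
    exact Tendsto.congr (fun N => (hdecomp N).symm) this
  -- step 4 : summation of the integrals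
  have hFi : ∀ n : ℕ, IntegrableOn (fun u => fc u * sterm (k+2) n u) (Set.Ioc (0:ℝ) 1) volume := by
    intro n
    apply MeasureTheory.IntegrableOn.mono_set _ Set.Ioc_subset_Icc_self
    apply ContinuousOn.integrableOn_Icc
    apply hfc.continuousOn.mul
    intro u hu
    exact (hasDerivAt_sterm (k+2) n (shift_pos (Icc_subset_T hu) n)).continuousAt.continuousWithinAt
  have hnormbd : ∀ n : ℕ, (∫ u in Set.Ioc (0:ℝ) 1, ‖fc u * sterm (k+2) n u‖)
      ≤ C * ((((n:ℝ)+1)^2)⁻¹) := by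
    intro n
    have hpt : ∀ u ∈ Set.Ioc (0:ℝ) 1, ‖fc u * sterm (k+2) n u‖ ≤ C * ((((n:ℝ)+1)^2)⁻¹) := by
      intro u hu
      rw [norm_mul]
      apply mul_le_mul (hC u ⟨hu.1.le, hu.2⟩) _ (norm_nonneg _) hC0
      have hupos : 0 < u + ((n:ℝ)+1) := by have := hu.1; positivity
      rw [Real.norm_eq_abs, abs_of_pos (sterm_nonneg (k+2) n hupos), sterm, zpow_neg,
        zpow_natCast]
      apply inv_anti₀ (by positivity)
      calc ((n:ℝ)+1)^2 ≤ ((n:ℝ)+1)^(k+2) := by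
            apply pow_le_pow_right₀ (by have : (0:ℝ) ≤ n := n.cast_nonneg; linarith) (by omega)
        _ ≤ (u + ((n:ℝ)+1))^(k+2) := by
            apply pow_le_pow_left₀ (by positivity) (by linarith [hu.1.le])
    calc (∫ u in Set.Ioc (0:ℝ) 1, ‖fc u * sterm (k+2) n u‖)
        ≤ ∫ _u in Set.Ioc (0:ℝ) 1, C * ((((n:ℝ)+1)^2)⁻¹) := by
          apply setIntegral_mono_on (hFi n).norm _ measurableSet_Ioc hpt
          exact integrableOn_const (by simp)
      _ = C * ((((n:ℝ)+1)^2)⁻¹) := by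
          rw [setIntegral_const]
          simp [Real.volume_Ioc]
  have hsummable_norm : Summable (fun n : ℕ => ∫ u in Set.Ioc (0:ℝ) 1, ‖fc u * sterm (k+2) n u‖) := by
    apply Summable.of_nonneg_of_le (fun n => integral_nonneg (fun u => norm_nonneg _)) hnormbd
    exact (summable_inv_pow 2 le_rfl).mul_left C
  have hsum2 := MeasureTheory.hasSum_integral_of_summable_integral_norm
    (μ := volume.restrict (Set.Ioc (0:ℝ) 1))
    (F := fun (n : ℕ) (u : ℝ) => fc u * sterm (k+2) n u) hFi hsummable_norm
  have htsum_eq : (fun u => ∑' n : ℕ, fc u * sterm (k+2) n u)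
      = fun u => fc u * Sser (k+2) u := funext (fun u => tsum_mul_left)
  rw [htsum_eq] at hsum2
  -- combine
  have hsum3 : HasSum (fun n : ℕ => ∫ u in (0:ℝ)..1, fc u * sterm (k+2) n u)
      (∫ u in Set.Ioc (0:ℝ) 1, fc u * Sser (k+2) u) := by
    have e : (fun n : ℕ => ∫ u in (0:ℝ)..1, fc u * sterm (k+2) n u)
        = fun n : ℕ => ∫ u in Set.Ioc (0:ℝ) 1, fc u * sterm (k+2) n u :=
      funext (fun n => intervalIntegral.integral_of_le zero_le_one)
    rw [e]
    exact hsum2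
  have hmain : (∫ x in (0:ℝ)..1, h x) = ∫ u in Set.Ioc (0:ℝ) 1, fc u * Sser (k+2) u :=
    (tendsto_nhds_unique ((hsum3.tendsto_sum_nat).congr hpartial) hlim).symm
  have hL : (∫ x in (0:ℝ)..1, x ^ k * f (Int.fract (1/x))) = ∫ x in (0:ℝ)..1, h x := by
    apply intervalIntegral.integral_congr
    intro x _
    rw [hhdef]
    simp only [hfr]
  rw [hL, hmain]
  exact setIntegral_congr_fun measurableSet_Ioc
    (fun u hu => by rw [hfc_eq u ⟨hu.1.le, hu.2⟩])
end FMF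

/-- The sequence `α` : `α 0 = γ` and `α n = ζ(n+1)` for `n ≥ 1`. -/
noncomputable def alphaSeq (n : ℕ) : ℝ :=
  if n = 0 then Real.eulerMascheroniConstant else (riemannZeta ((n : ℂ) + 1)).re

namespace FMF

lemma alpha_eq (m : ℕ) (hm : 2 ≤ m) : alphaSeq (m-1) = (riemannZeta ((m:ℕ):ℂ)).re := by
  rw [alphaSeq, if_neg (by omega)]
  congr 2
  have : ((m-1:ℕ):ℂ) = (m:ℂ) - 1 := by
    push_cast [Nat.cast_sub (by omega : 1 ≤ m)]
    ring
  rw [this]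
  ring

lemma Gd_bd0 (m : ℕ) (hm : 1 ≤ m) :
    Gd m 0 = (-1:ℝ)^m * (Nat.factorial (m-1)) * alphaSeq (m-1) := by
  match m, hm with
  | 1, _ =>
    rw [Gd1_zero, alphaSeq]
    simp [Nat.factorial]
  | (m+2), _ =>
    show (-1:ℝ)^(m+2) * (Nat.factorial (m+1)) * Sser (m+2) 0 = _
    rw [Sser_zero (m+2) (by omega), ← alpha_eq (m+2) (by omega)]
    norm_num

lemma Gd_bd1 (m : ℕ) (hm : 1 ≤ m) :
    Gd m 1 = (-1:ℝ)^m * (Nat.factorial (m-1)) * (alphaSeq (m-1) - 1) := by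
  match m, hm with
  | 1, _ =>
    rw [Gd1_one, alphaSeq]
    simp [Nat.factorial]
  | (m+2), _ =>
    show (-1:ℝ)^(m+2) * (Nat.factorial (m+1)) * Sser (m+2) 1 = _
    rw [Sser_one (m+2) (by omega), ← alpha_eq (m+2) (by omega)]
    norm_num

end FMF

open FMF

theorem fractional_moment_formula (k : ℕ) (f : ℝ → ℝ)
    (hf : ContDiffOn ℝ (k + 2) f (Set.Icc 0 1)) :
    ∫ x in (0:ℝ)..1, x ^ k * f (Int.fract (1 / x)) =
      (1 / (Nat.factorial (k + 1) : ℝ)) *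
        ((∑ j ∈ Finset.range (k + 1),
            (Nat.factorial (k - j) : ℝ) *
              (iteratedDerivWithin j f (Set.Icc 0 1) 0 * alphaSeq (k - j) -
                iteratedDerivWithin j f (Set.Icc 0 1) 1 * (alphaSeq (k - j) - 1))) +
          ∫ x in (0:ℝ)..1,
            iteratedDerivWithin (k + 2) f (Set.Icc 0 1) x * Real.log (Real.Gamma (x + 1))) := by
  have key := ibp_chain k f hf (k+2) le_rfl
  have hlhs := lhs_eq k f hf
  rw [← intervalIntegral.integral_of_le zero_le_one] at hlhs
  -- express ∫ f·Gd(k+2) as (-1)^k (k+1)! · LHS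
  have hGdpt : ∀ x : ℝ, f x * Gd (k+2) x
      = ((-1:ℝ)^(k+2) * (Nat.factorial (k+1) : ℝ)) * (f x * Sser (k+2) x) := by
    intro x
    show f x * ((-1:ℝ)^(k+2) * (Nat.factorial (k+1) : ℝ) * Sser (k+2) x) = _
    ring
  have hIG : (∫ x in (0:ℝ)..1, f x * Gd (k+2) x)
      = ((-1:ℝ)^(k+2) * (Nat.factorial (k+1) : ℝ))
        * ∫ x in (0:ℝ)..1, x ^ k * f (Int.fract (1 / x)) := by
    rw [hlhs]
    simp_rw [hGdpt]
    rw [intervalIntegral.integral_const_mul]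
  -- evaluate the boundary sum
  have hbsum : (∑ i ∈ Finset.range (k+2), (-1:ℝ)^i *
        (iteratedDerivWithin i f (Set.Icc 0 1) 1 * Gd (k+1-i) 1
          - iteratedDerivWithin i f (Set.Icc 0 1) 0 * Gd (k+1-i) 0))
      = (-1:ℝ)^k * ∑ j ∈ Finset.range (k + 1),
          (Nat.factorial (k - j) : ℝ) *
            (iteratedDerivWithin j f (Set.Icc 0 1) 0 * alphaSeq (k - j) -
              iteratedDerivWithin j f (Set.Icc 0 1) 1 * (alphaSeq (k - j) - 1)) := by
    rw [Finset.sum_range_succ]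
    have hlast : (k+1) - (k+1) = 0 := by omega
    rw [hlast, Gd0_zero, Gd0_one]
    rw [Finset.mul_sum]
    have : ∀ i ∈ Finset.range (k+1), (-1:ℝ)^i *
        (iteratedDerivWithin i f (Set.Icc 0 1) 1 * Gd (k+1-i) 1
          - iteratedDerivWithin i f (Set.Icc 0 1) 0 * Gd (k+1-i) 0)
        = (-1:ℝ)^k * ((Nat.factorial (k - i) : ℝ) *
            (iteratedDerivWithin i f (Set.Icc 0 1) 0 * alphaSeq (k - i) -
              iteratedDerivWithin i f (Set.Icc 0 1) 1 * (alphaSeq (k - i) - 1))) := by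
      intro i hi
      have hik : i ≤ k := by
        have := Finset.mem_range.1 hi
        omega
      have hm1 : 1 ≤ k+1-i := by omega
      have hmm : (k+1-i) - 1 = k - i := by omega
      rw [Gd_bd0 _ hm1, Gd_bd1 _ hm1, hmm]
      have hpow : (-1:ℝ)^i * (-1:ℝ)^(k+1-i) = -(-1:ℝ)^k := by
        rw [← pow_add, (show i + (k+1-i) = k+1 by omega), pow_succ]
        ring
      linear_combination (iteratedDerivWithin i f (Set.Icc 0 1) 1 * (Nat.factorial (k-i) : ℝ)
        * (alphaSeq (k-i) - 1) - iteratedDerivWithin i f (Set.Icc 0 1) 0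
        * (Nat.factorial (k-i) : ℝ) * alphaSeq (k-i)) * hpow
    rw [Finset.sum_congr rfl this]
    ring
  -- finish
  have hsub : (k+2) - (k+2) = 0 := by omega
  rw [hbsum, hsub] at key
  have hGd0 : ∀ x : ℝ, Gd 0 x = Real.log (Real.Gamma (x+1)) := fun x => rfl
  simp_rw [hGd0] at key
  rw [hIG] at key
  have hpow2 : ((-1:ℝ))^(k+2) = (-1:ℝ)^k := by
    rw [pow_add]
    norm_num
  rw [hpow2] at key
  have hfac : (Nat.factorial (k+1) : ℝ) ≠ 0 := Nat.cast_ne_zero.2 (Nat.factorial_ne_zero _)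
  have hneg : ((-1:ℝ))^k ≠ 0 := by
    apply pow_ne_zero
    norm_num
  have key2 : (Nat.factorial (k+1) : ℝ)
        * (∫ x in (0:ℝ)..1, x ^ k * f (Int.fract (1 / x)))
      = (∑ j ∈ Finset.range (k + 1), (Nat.factorial (k - j) : ℝ) *
            (iteratedDerivWithin j f (Set.Icc 0 1) 0 * alphaSeq (k - j) -
              iteratedDerivWithin j f (Set.Icc 0 1) 1 * (alphaSeq (k - j) - 1)))
        + ∫ x in (0:ℝ)..1,
            iteratedDerivWithin (k + 2) f (Set.Icc 0 1) x * Real.log (Real.Gamma (x + 1)) := by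
    apply mul_left_cancel₀ hneg
    linear_combination key
  rw [← key2]
  field_simp
end
end

section
/- ∫₀¹ cos(2πx) · log Γ(x+1) dx = 1/4 − Si(2π)/(2π), where Si is the sine integral function. -/
set_option maxHeartbeats 1000000

open MeasureTheory Real

/-- The sine integral `Si(x) = ∫₀^x (sin t)/t dt`. -/
noncomputable def Si (x : ℝ) : ℝ := ∫ t in (0:ℝ)..x, Real.sin t / t

open Filter Set intervalIntegral Topology


private lemma sinc_abs_le (t : ℝ) : |Real.sin t / t| ≤ 1 := by
  rcases eq_or_ne t 0 with h | h
  · simp [h]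
  · rw [abs_div]
    exact div_le_one_of_le₀ Real.abs_sin_le_abs (abs_nonneg t)

private lemma tendsto_tails {f : ℝ → ℝ} (hf : IntervalIntegrable f volume 0 1)
    {C : ℝ} (hC : ∀ x ∈ Set.Icc (0:ℝ) 1, |f x| ≤ C) :
    Tendsto (fun ε => ∫ x in ε..(1-ε), f x) (𝓝[>] (0:ℝ))
      (𝓝 (∫ x in (0:ℝ)..1, f x)) := by
  have key : ∀ᶠ ε in 𝓝[>] (0:ℝ),
      ‖(∫ x in ε..(1-ε), f x) - ∫ x in (0:ℝ)..1, f x‖ ≤ 2*C*ε := by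
    filter_upwards [Ioo_mem_nhdsGT_of_mem (Set.left_mem_Ico.2 (by norm_num : (0:ℝ) < 1/2))]
      with ε hε
    obtain ⟨h1, h2⟩ := hε
    have hs1 : Set.uIcc (0:ℝ) ε ⊆ Set.uIcc (0:ℝ) 1 := by
      rw [Set.uIcc_of_le h1.le, Set.uIcc_of_le (by norm_num : (0:ℝ) ≤ 1)]
      exact Set.Icc_subset_Icc le_rfl (by linarith)
    have hs2 : Set.uIcc ε (1-ε) ⊆ Set.uIcc (0:ℝ) 1 := by
      rw [Set.uIcc_of_le (by linarith), Set.uIcc_of_le (by norm_num : (0:ℝ) ≤ 1)]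
      exact Set.Icc_subset_Icc (by linarith) (by linarith)
    have hs3 : Set.uIcc (1-ε) 1 ⊆ Set.uIcc (0:ℝ) 1 := by
      rw [Set.uIcc_of_le (by linarith), Set.uIcc_of_le (by norm_num : (0:ℝ) ≤ 1)]
      exact Set.Icc_subset_Icc (by linarith) le_rfl
    have i1 := hf.mono_set hs1
    have i2 := hf.mono_set hs2
    have i3 := hf.mono_set hs3
    have eqA := integral_add_adjacent_intervals i1 i2
    have eqB := integral_add_adjacent_intervals (i1.trans i2) i3
    have b1 : ‖∫ x in (0:ℝ)..ε, f x‖ ≤ C * |ε - 0| := by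
      apply intervalIntegral.norm_integral_le_of_norm_le_const
      intro x hx
      rw [Set.uIoc_of_le h1.le] at hx
      rw [Real.norm_eq_abs]
      exact hC x ⟨hx.1.le, by linarith [hx.2]⟩
    have b2 : ‖∫ x in (1-ε)..1, f x‖ ≤ C * |1 - (1-ε)| := by
      apply intervalIntegral.norm_integral_le_of_norm_le_const
      intro x hx
      rw [Set.uIoc_of_le (by linarith)] at hx
      rw [Real.norm_eq_abs]
      exact hC x ⟨by linarith [hx.1], hx.2⟩
    rw [show |ε - 0| = ε by rw [abs_of_nonneg (by linarith)]; ring] at b1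
    rw [show |1 - (1-ε)| = ε by rw [show (1:ℝ)-(1-ε) = ε by ring]; exact abs_of_nonneg h1.le] at b2
    have : (∫ x in ε..(1-ε), f x) - ∫ x in (0:ℝ)..1, f x
        = -((∫ x in (0:ℝ)..ε, f x) + (∫ x in (1-ε)..1, f x)) := by linarith
    rw [this, norm_neg]
    calc ‖(∫ x in (0:ℝ)..ε, f x) + (∫ x in (1-ε)..1, f x)‖
        ≤ ‖∫ x in (0:ℝ)..ε, f x‖ + ‖∫ x in (1-ε)..1, f x‖ := norm_add_le _ _
      _ ≤ 2*C*ε := by linarith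
  have lim : Tendsto (fun ε : ℝ => 2*C*ε) (𝓝[>] (0:ℝ)) (𝓝 0) := by
    have : Tendsto (fun ε : ℝ => 2*C*ε) (𝓝 (0:ℝ)) (𝓝 (2*C*0)) :=
      (continuous_const.mul continuous_id).tendsto 0
    simpa using this.mono_left nhdsWithin_le_nhds
  have := squeeze_zero_norm' key lim
  have h2 := this.add_const (∫ x in (0:ℝ)..1, f x)
  simpa using h2

private lemma tlog : Tendsto (fun t : ℝ => t * Real.log t) (𝓝[>] (0:ℝ)) (𝓝 0) := by
  have := tendsto_log_mul_rpow_nhdsGT_zero (r := 1) one_pos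
  simp only [Real.rpow_one] at this
  simpa [mul_comm] using this

private lemma ts : Tendsto (fun ε : ℝ => Real.sin (2*π*ε)) (𝓝[>] (0:ℝ)) (𝓝 0) := by
  have : Tendsto (fun ε : ℝ => Real.sin (2*π*ε)) (𝓝 (0:ℝ)) (𝓝 (Real.sin (2*π*0))) :=
    (Real.continuous_sin.comp (continuous_const.mul continuous_id)).tendsto 0
  simpa using this.mono_left nhdsWithin_le_nhds

private lemma tb : Tendsto (fun ε : ℝ => Real.sin (2*π*ε) * Real.log ε) (𝓝[>] (0:ℝ)) (𝓝 0) := by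
  refine squeeze_zero_norm' (a := fun ε : ℝ => 2*π*‖ε * Real.log ε‖) ?_ ?_
  · filter_upwards [self_mem_nhdsWithin] with ε (hε : (0:ℝ) < ε)
    have hsin : |Real.sin (2*π*ε)| ≤ 2*π*ε := by
      have h := Real.abs_sin_le_abs (x := 2*π*ε)
      have habs : |(2*π*ε : ℝ)| = 2*π*ε := abs_of_nonneg (by positivity)
      rwa [habs] at h
    rw [Real.norm_eq_abs, Real.norm_eq_abs, abs_mul, abs_mul]
    rw [abs_of_nonneg hε.le]
    calc |Real.sin (2*π*ε)| * |Real.log ε| ≤ (2*π*ε) * |Real.log ε| := by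
          apply mul_le_mul_of_nonneg_right hsin (abs_nonneg _)
      _ = 2*π*(ε * |Real.log ε|) := by ring
  · have := (tlog.norm).const_mul (2*π)
    simpa using this

private lemma tsinpi : Tendsto (fun ε : ℝ => Real.sin (π*ε)) (𝓝[>] (0:ℝ)) (𝓝[>] (0:ℝ)) := by
  rw [tendsto_nhdsWithin_iff]
  constructor
  · have : Tendsto (fun ε : ℝ => Real.sin (π*ε)) (𝓝 (0:ℝ)) (𝓝 (Real.sin (π*0))) :=
      (Real.continuous_sin.comp (continuous_const.mul continuous_id)).tendsto 0
    simpa using this.mono_left nhdsWithin_le_nhds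
  · filter_upwards [Ioo_mem_nhdsGT_of_mem (Set.left_mem_Ico.2 (by norm_num : (0:ℝ) < 1))]
      with ε hε
    exact Real.sin_pos_of_pos_of_lt_pi (mul_pos Real.pi_pos hε.1)
      (by nlinarith [Real.pi_gt_three, hε.2])

private lemma tc : Tendsto (fun ε : ℝ => Real.sin (2*π*ε) * Real.log (Real.sin (π*ε)))
    (𝓝[>] (0:ℝ)) (𝓝 0) := by
  have h1 : Tendsto (fun ε : ℝ => 2 * Real.cos (π*ε)) (𝓝[>] (0:ℝ)) (𝓝 2) := by
    have : Tendsto (fun ε : ℝ => 2 * Real.cos (π*ε)) (𝓝 (0:ℝ)) (𝓝 (2 * Real.cos (π*0))) :=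
      (continuous_const.mul (Real.continuous_cos.comp (continuous_const.mul continuous_id))).tendsto 0
    simpa using this.mono_left nhdsWithin_le_nhds
  have h2 : Tendsto (fun ε : ℝ => Real.sin (π*ε) * Real.log (Real.sin (π*ε)))
      (𝓝[>] (0:ℝ)) (𝓝 0) := tlog.comp tsinpi
  have h3 := h1.mul h2
  rw [mul_zero] at h3
  apply h3.congr
  intro ε
  rw [show 2*π*ε = 2*(π*ε) by ring, Real.sin_two_mul]
  ring

private lemma td : Tendsto (fun ε : ℝ => Real.sin (2*π*ε) * Real.log (1-ε)) (𝓝[>] (0:ℝ)) (𝓝 0) := by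
  have hc : ContinuousAt (fun ε : ℝ => Real.sin (2*π*ε) * Real.log (1-ε)) 0 := by
    apply ContinuousAt.mul
    · exact (Real.continuous_sin.comp (continuous_const.mul continuous_id)).continuousAt
    · exact (Real.continuousAt_log (by norm_num)).comp (by fun_prop)
  have := hc.tendsto.mono_left (nhdsWithin_le_nhds (s := Set.Ioi (0:ℝ)))
  simpa using this

private lemma int_cos_sq : ∫ x in (0:ℝ)..1, Real.cos (π*x)^2 = 1/2 := by
  have h := intervalIntegral.integral_comp_mul_left (a := (0:ℝ)) (b := 1)
    (fun t => Real.cos t ^ 2) Real.pi_ne_zero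
  simp only [mul_zero, mul_one] at h
  rw [h, integral_cos_sq]
  simp only [Real.cos_pi, Real.sin_pi, Real.cos_zero, Real.sin_zero, smul_eq_mul]
  field_simp
  ring

private lemma int_sinc : ∫ x in (0:ℝ)..1, Real.sin (2*π*x) / (2*π*x)
    = (∫ t in (0:ℝ)..(2*π), Real.sin t / t) / (2*π) := by
  have h := intervalIntegral.integral_comp_mul_left (a := (0:ℝ)) (b := 1)
    (fun t => Real.sin t / t) (by positivity : (2*π : ℝ) ≠ 0)
  simp only [mul_zero, mul_one] at h
  rw [h, smul_eq_mul]
  rw [inv_mul_eq_div]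

private lemma formula {ε : ℝ} (h1 : 0 < ε) (h2 : ε < 1/2) :
    ∫ x in ε..(1-ε), Real.cos (2*π*x) * Real.log (Real.Gamma (x+1)) =
      (1/2) * ( Real.log π * (-Real.sin (2*π*ε)/π)
        - ( -(Real.sin (2*π*ε) * Real.log (Real.sin (π*ε)))/π
            - ∫ x in ε..(1-ε), Real.cos (π*x)^2 ) )
      + ( -(Real.sin (2*π*ε) * Real.log (1-ε) + Real.sin (2*π*ε) * Real.log ε)/(2*π)
          - ∫ x in ε..(1-ε), Real.sin (2*π*x)/(2*π*x) ) := by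
  have hle : ε ≤ 1-ε := by linarith
  have hmem : ∀ x ∈ Set.uIcc ε (1-ε), 0 < x ∧ x < 1 := by
    rw [Set.uIcc_of_le hle]
    intro x hx
    exact ⟨by linarith [hx.1], by linarith [hx.2]⟩
  have hsinpos : ∀ x ∈ Set.uIcc ε (1-ε), 0 < Real.sin (π*x) := by
    intro x hx
    refine Real.sin_pos_of_pos_of_lt_pi (mul_pos Real.pi_pos (hmem x hx).1) ?_
    nlinarith [Real.pi_pos, (hmem x hx).2]
  have ccos2 : Continuous fun x : ℝ => Real.cos (2*π*x) := by fun_prop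
  -- continuity of log ∘ Gamma at positive points
  have clogG : ∀ {y : ℝ}, 0 < y → ContinuousAt (fun x => Real.log (Real.Gamma x)) y := by
    intro y hy
    refine ContinuousAt.log ?_ (Real.Gamma_pos_of_pos hy).ne'
    refine (Real.differentiableAt_Gamma ?_).continuousAt
    intro m
    have hm : (0:ℝ) ≤ m := Nat.cast_nonneg m
    exact ne_of_gt (by linarith)
  have hG : ContinuousOn (fun x => Real.cos (2*π*x) * Real.log (Real.Gamma x))
      (Set.uIcc ε (1-ε)) := by
    refine ccos2.continuousOn.mul ?_
    intro x hx
    exact (clogG (hmem x hx).1).continuousWithinAt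
  have hG1 : ContinuousOn (fun x => Real.cos (2*π*x) * Real.log (Real.Gamma (1-x)))
      (Set.uIcc ε (1-ε)) := by
    refine ccos2.continuousOn.mul ?_
    intro x hx
    exact ((clogG (by linarith [(hmem x hx).2] : (0:ℝ) < 1-x)).comp
      (continuous_const.sub continuous_id).continuousAt).continuousWithinAt
  have hLog : ContinuousOn (fun x => Real.cos (2*π*x) * Real.log x) (Set.uIcc ε (1-ε)) := by
    refine ccos2.continuousOn.mul ?_
    intro x hx
    exact (Real.continuousAt_log (hmem x hx).1.ne').continuousWithinAt
  have csin : Continuous fun x : ℝ => Real.sin (π*x) :=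
    Real.continuous_sin.comp (continuous_const.mul continuous_id)
  have hLogSin : ContinuousOn (fun x => Real.log (Real.sin (π*x))) (Set.uIcc ε (1-ε)) :=
    csin.continuousOn.log fun x hx => (hsinpos x hx).ne'
  -- derivative of v
  have hv : ∀ x ∈ Set.uIcc ε (1-ε),
      HasDerivAt (fun y => Real.sin (2*π*y) / (2*π)) (Real.cos (2*π*x)) x := by
    intro x _
    have hd1 : HasDerivAt (fun y : ℝ => 2*π*y) (2*π) x := by
      simpa using (hasDerivAt_id x).const_mul (2*π)
    have hd2 := (Real.hasDerivAt_sin (2*π*x)).comp x hd1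
    have hd3 := hd2.div_const (2*π)
    exact hd3.congr_deriv (mul_div_cancel_right₀ _ (by positivity))
  -- IBP for log
  have ibp1 := intervalIntegral.integral_mul_deriv_eq_deriv_mul (a := ε) (b := 1-ε)
    (u := Real.log) (u' := fun x => x⁻¹)
    (v := fun y => Real.sin (2*π*y)/(2*π)) (v' := fun x => Real.cos (2*π*x))
    (fun x hx => Real.hasDerivAt_log (hmem x hx).1.ne') hv
    ((continuousOn_inv₀.mono (fun x hx => (hmem x hx).1.ne')).intervalIntegrable)
    (ccos2.intervalIntegrable ε (1-ε))
  have e1 : ∫ x in ε..(1-ε), x⁻¹ * (Real.sin (2*π*x)/(2*π))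
      = ∫ x in ε..(1-ε), Real.sin (2*π*x)/(2*π*x) := by
    apply intervalIntegral.integral_congr
    intro x hx
    show x⁻¹ * (Real.sin (2*π*x)/(2*π)) = Real.sin (2*π*x)/(2*π*x)
    rw [inv_mul_eq_div, div_div]
  -- IBP for log sin
  have hu2 : ∀ x ∈ Set.uIcc ε (1-ε), HasDerivAt (fun y => Real.log (Real.sin (π*y)))
      ((Real.sin (π*x))⁻¹ * (Real.cos (π*x) * π)) x := by
    intro x hx
    have hπ : HasDerivAt (fun y : ℝ => π*y) π x := by
      simpa using (hasDerivAt_id x).const_mul π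
    have hs := (Real.hasDerivAt_sin (π*x)).comp x hπ
    exact (Real.hasDerivAt_log (hsinpos x hx).ne').comp x hs
  have cu' : ContinuousOn (fun x => (Real.sin (π*x))⁻¹ * (Real.cos (π*x) * π))
      (Set.uIcc ε (1-ε)) := by
    exact (csin.continuousOn.inv₀ fun x hx => (hsinpos x hx).ne').mul
      ((Real.continuous_cos.comp (continuous_const.mul continuous_id)).mul
        continuous_const).continuousOn
  have ibp2 := intervalIntegral.integral_mul_deriv_eq_deriv_mul (a := ε) (b := 1-ε)
    (u := fun y => Real.log (Real.sin (π*y)))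
    (u' := fun x => (Real.sin (π*x))⁻¹ * (Real.cos (π*x) * π))
    (v := fun y => Real.sin (2*π*y)/(2*π)) (v' := fun x => Real.cos (2*π*x))
    hu2 hv cu'.intervalIntegrable (ccos2.intervalIntegrable ε (1-ε))
  have e2 : ∫ x in ε..(1-ε), (Real.sin (π*x))⁻¹ * (Real.cos (π*x)*π) * (Real.sin (2*π*x)/(2*π))
      = ∫ x in ε..(1-ε), Real.cos (π*x)^2 := by
    apply intervalIntegral.integral_congr
    intro x hx
    have hs := (hsinpos x hx).ne'
    show (Real.sin (π*x))⁻¹ * (Real.cos (π*x)*π) * (Real.sin (2*π*x)/(2*π)) = Real.cos (π*x)^2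
    rw [show 2*π*x = 2*(π*x) by ring, Real.sin_two_mul]
    field_simp
  -- integral of cos
  have e3 : ∫ x in ε..(1-ε), Real.cos (2*π*x)
      = (Real.sin (2*π*(1-ε)) - Real.sin (2*π*ε))/(2*π) := by
    have h := intervalIntegral.integral_comp_mul_left (a := ε) (b := 1-ε)
      (fun t => Real.cos t) (by positivity : (2*π:ℝ) ≠ 0)
    rw [h, integral_cos, smul_eq_mul, inv_mul_eq_div]
  -- split of Gamma(x+1)
  have split : ∫ x in ε..(1-ε), Real.cos (2*π*x) * Real.log (Real.Gamma (x+1))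
      = (∫ x in ε..(1-ε), Real.cos (2*π*x) * Real.log (Real.Gamma x))
        + ∫ x in ε..(1-ε), Real.cos (2*π*x) * Real.log x := by
    rw [← intervalIntegral.integral_add hG.intervalIntegrable hLog.intervalIntegrable]
    apply intervalIntegral.integral_congr
    intro x hx
    show Real.cos (2*π*x) * Real.log (Real.Gamma (x+1))
      = Real.cos (2*π*x) * Real.log (Real.Gamma x) + Real.cos (2*π*x) * Real.log x
    rw [Real.Gamma_add_one (hmem x hx).1.ne',
      Real.log_mul (hmem x hx).1.ne' (Real.Gamma_pos_of_pos (hmem x hx).1).ne']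
    ring
  -- reflection
  have hrefl : (∫ x in ε..(1-ε), Real.cos (2*π*x) * Real.log (Real.Gamma x))
      = ∫ x in ε..(1-ε), Real.cos (2*π*x) * Real.log (Real.Gamma (1-x)) := by
    have h := intervalIntegral.integral_comp_sub_left (a := ε) (b := 1-ε)
      (fun x => Real.cos (2*π*x) * Real.log (Real.Gamma x)) 1
    rw [show (1:ℝ)-(1-ε) = ε by ring] at h
    rw [← h]
    apply intervalIntegral.integral_congr
    intro x hx
    show Real.cos (2*π*(1-x)) * Real.log (Real.Gamma (1-x))
      = Real.cos (2*π*x) * Real.log (Real.Gamma (1-x))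
    rw [show 2*π*(1-x) = 2*π - 2*π*x by ring, Real.cos_sub, Real.sin_two_pi, Real.cos_two_pi]
    ring
  have eqI : 2 * (∫ x in ε..(1-ε), Real.cos (2*π*x) * Real.log (Real.Gamma x))
      = Real.log π * ((Real.sin (2*π*(1-ε)) - Real.sin (2*π*ε))/(2*π))
        - ∫ x in ε..(1-ε), Real.log (Real.sin (π*x)) * Real.cos (2*π*x) := by
    have step1 : 2 * (∫ x in ε..(1-ε), Real.cos (2*π*x) * Real.log (Real.Gamma x))
        = ∫ x in ε..(1-ε), (Real.log π * Real.cos (2*π*x)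
            - Real.log (Real.sin (π*x)) * Real.cos (2*π*x)) := by
      rw [two_mul]
      nth_rewrite 2 [hrefl]
      rw [← intervalIntegral.integral_add hG.intervalIntegrable hG1.intervalIntegrable]
      apply intervalIntegral.integral_congr
      intro x hx
      show Real.cos (2*π*x) * Real.log (Real.Gamma x) + Real.cos (2*π*x) * Real.log (Real.Gamma (1-x))
        = Real.log π * Real.cos (2*π*x) - Real.log (Real.sin (π*x)) * Real.cos (2*π*x)
      have hx0 := (hmem x hx).1
      have hlogsum : Real.log (Real.Gamma x) + Real.log (Real.Gamma (1-x))
          = Real.log π - Real.log (Real.sin (π*x)) := by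
        rw [← Real.log_mul (Real.Gamma_pos_of_pos hx0).ne'
            (Real.Gamma_pos_of_pos (by linarith [(hmem x hx).2] : (0:ℝ) < 1-x)).ne',
          Real.Gamma_mul_Gamma_one_sub,
          Real.log_div Real.pi_ne_zero (hsinpos x hx).ne']
      calc Real.cos (2*π*x) * Real.log (Real.Gamma x)
            + Real.cos (2*π*x) * Real.log (Real.Gamma (1-x))
          = Real.cos (2*π*x) * (Real.log (Real.Gamma x) + Real.log (Real.Gamma (1-x))) := by ring
        _ = Real.log π * Real.cos (2*π*x) - Real.log (Real.sin (π*x)) * Real.cos (2*π*x) := by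
            rw [hlogsum]; ring
    rw [step1, intervalIntegral.integral_sub (f := fun x => Real.log π * Real.cos (2*π*x))
      (g := fun x => Real.log (Real.sin (π*x)) * Real.cos (2*π*x))
      ((continuous_const.mul ccos2).intervalIntegrable ε (1-ε))
      ((hLogSin.mul ccos2.continuousOn).intervalIntegrable),
      intervalIntegral.integral_const_mul, e3]
  -- assemble
  have eqB : ∫ x in ε..(1-ε), Real.cos (2*π*x) * Real.log x
      = ∫ x in ε..(1-ε), Real.log x * Real.cos (2*π*x) :=
    intervalIntegral.integral_congr fun x _ => mul_comm _ _
  have ssub : Real.sin (2*π*(1-ε)) = -Real.sin (2*π*ε) := by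
    rw [show 2*π*(1-ε) = 2*π - 2*π*ε by ring, Real.sin_sub, Real.sin_two_pi, Real.cos_two_pi]
    ring
  have ssin : Real.sin (π*(1-ε)) = Real.sin (π*ε) := by
    rw [show π*(1-ε) = π - π*ε by ring, Real.sin_pi_sub]
  rw [split, eqB, ibp1, e1]
  rw [e2] at ibp2
  rw [ibp2] at eqI
  beta_reduce at eqI ⊢
  rw [ssub, ssin] at eqI
  rw [ssub]
  linear_combination eqI / 2

private lemma clogGamma {y : ℝ} (hy : 0 < y) :
    ContinuousAt (fun x => Real.log (Real.Gamma x)) y := by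
  refine ContinuousAt.log ?_ (Real.Gamma_pos_of_pos hy).ne'
  refine (Real.differentiableAt_Gamma ?_).continuousAt
  intro m
  have hm : (0:ℝ) ≤ m := Nat.cast_nonneg m
  exact ne_of_gt (by linarith)

private lemma isinc : IntervalIntegrable (fun x => Real.sin (2*π*x)/(2*π*x)) volume 0 1 := by
  rw [intervalIntegrable_iff, Set.uIoc_of_le (zero_le_one)]
  apply Measure.integrableOn_of_bounded (M := 1)
  · exact measure_Ioc_lt_top.ne
  · exact ((Real.measurable_sin.comp (measurable_const.mul measurable_id)).div
      (measurable_const.mul measurable_id)).aestronglyMeasurable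
  · exact ae_of_all _ fun x => by rw [Real.norm_eq_abs]; exact sinc_abs_le (2*π*x)

theorem integral_cos_log_Gamma :
    ∫ x in (0:ℝ)..1, Real.cos (2 * π * x) * Real.log (Real.Gamma (x + 1)) =
      1 / 4 - Si (2 * π) / (2 * π) := by
  have hc : ContinuousOn (fun x : ℝ => Real.cos (2*π*x) * Real.log (Real.Gamma (x+1)))
      (Set.Icc 0 1) := by
    refine ((Real.continuous_cos.comp (continuous_const.mul continuous_id)).continuousOn).mul ?_
    intro x hx
    have h0 : (0:ℝ) < x + 1 := by linarith [hx.1]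
    have hadd : ContinuousAt (fun x : ℝ => x + 1) x := by fun_prop
    have hcomp := ContinuousAt.comp (f := fun y : ℝ => y + 1) (clogGamma h0) hadd
    exact hcomp.continuousWithinAt
  obtain ⟨C, hC⟩ := (isCompact_Icc (a := (0:ℝ)) (b := 1)).exists_bound_of_continuousOn hc
  have huIcc : Set.uIcc (0:ℝ) 1 = Set.Icc 0 1 := Set.uIcc_of_le zero_le_one
  have hint : IntervalIntegrable (fun x : ℝ => Real.cos (2*π*x) * Real.log (Real.Gamma (x+1)))
      volume 0 1 := (huIcc ▸ hc).intervalIntegrable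
  have hP1 : Tendsto (fun ε => ∫ x in ε..(1-ε), Real.cos (2*π*x) * Real.log (Real.Gamma (x+1)))
      (𝓝[>] (0:ℝ))
      (𝓝 (∫ x in (0:ℝ)..1, Real.cos (2*π*x) * Real.log (Real.Gamma (x+1)))) :=
    tendsto_tails hint fun x hx => by
      rw [← Real.norm_eq_abs]; exact hC x hx
  -- limits of the two model integrals
  have hQc : Tendsto (fun ε => ∫ x in ε..(1-ε), Real.cos (π*x)^2) (𝓝[>] (0:ℝ))
      (𝓝 (1/2)) := by
    have hcont : Continuous fun x : ℝ => Real.cos (π*x)^2 :=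
      (Real.continuous_cos.comp (continuous_const.mul continuous_id)).pow 2
    have := tendsto_tails (hcont.intervalIntegrable 0 1)
      (C := 1) (fun x _ => by
        rw [abs_of_nonneg (sq_nonneg _)]
        exact Real.cos_sq_le_one _)
    rwa [int_cos_sq] at this
  have hQs : Tendsto (fun ε => ∫ x in ε..(1-ε), Real.sin (2*π*x)/(2*π*x)) (𝓝[>] (0:ℝ))
      (𝓝 (Si (2*π) / (2*π))) := by
    have := tendsto_tails isinc (C := 1) (fun x _ => sinc_abs_le (2*π*x))
    rwa [int_sinc] at this
  -- limit of the explicit formula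
  have t1 : Tendsto (fun ε : ℝ => Real.log π * (-Real.sin (2*π*ε)/π)) (𝓝[>] (0:ℝ))
      (𝓝 (Real.log π * (-(0:ℝ)/π))) := (ts.neg.div_const π).const_mul (Real.log π)
  have t2 : Tendsto (fun ε : ℝ => -(Real.sin (2*π*ε) * Real.log (Real.sin (π*ε)))/π)
      (𝓝[>] (0:ℝ)) (𝓝 (-(0:ℝ)/π)) := tc.neg.div_const π
  have t3 : Tendsto (fun ε : ℝ =>
      -(Real.sin (2*π*ε) * Real.log (1-ε) + Real.sin (2*π*ε) * Real.log ε)/(2*π))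
      (𝓝[>] (0:ℝ)) (𝓝 (-((0:ℝ)+0)/(2*π))) := (td.add tb).neg.div_const (2*π)
  have total := ((t1.sub (t2.sub hQc)).const_mul (1/2 : ℝ)).add (t3.sub hQs)
  have hval : (1/2 : ℝ) * (Real.log π * (-(0:ℝ)/π) - (-(0:ℝ)/π - 1/2))
      + (-((0:ℝ)+0)/(2*π) - Si (2*π)/(2*π)) = 1/4 - Si (2*π)/(2*π) := by
    ring
  rw [hval] at total
  have hP2 : Tendsto (fun ε => ∫ x in ε..(1-ε), Real.cos (2*π*x) * Real.log (Real.Gamma (x+1)))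
      (𝓝[>] (0:ℝ)) (𝓝 (1/4 - Si (2*π)/(2*π))) := by
    refine total.congr' ?_
    filter_upwards [Ioo_mem_nhdsGT_of_mem (Set.left_mem_Ico.2 (by norm_num : (0:ℝ) < 1/2))]
      with ε hε
    exact (formula hε.1 hε.2).symm
  exact tendsto_nhds_unique hP1 hP2
end

section
/- For integers k ≥ m ≥ 1, ∫₀¹ x^k {1/x}^m dx = 1/(k+1−m) − (1/((k+1)·C(k,m))) · Σ_{j=k−m+1}^{k} C(j, k−m) · ζ(j+1), where ζ is the Riemann zeta function and C(a,b) the binomial coefficient. -/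
open MeasureTheory Real


noncomputable def KK (n a s : ℕ) : ℝ := ∫ u in (0:ℝ)..1, u ^ a / (u + n) ^ s

lemma KK_cont (n a s : ℕ) (hn : 1 ≤ n) :
    ContinuousOn (fun u : ℝ => u ^ a / (u + n) ^ s) (Set.Icc 0 1) := by
  apply ContinuousOn.div (by fun_prop) (by fun_prop)
  intro u hu
  have : (0:ℝ) < u + n := by
    have : (1:ℝ) ≤ (n:ℝ) := by exact_mod_cast hn
    nlinarith [hu.1]
  positivity

lemma KK_intble (n a s : ℕ) (hn : 1 ≤ n) :
    IntervalIntegrable (fun u : ℝ => u ^ a / (u + n) ^ s) volume 0 1 := by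
  apply ContinuousOn.intervalIntegrable
  rw [Set.uIcc_of_le (by norm_num)]
  exact KK_cont n a s hn

lemma KK_nonneg (n a s : ℕ) : 0 ≤ KK n a s := by
  apply intervalIntegral.integral_nonneg (by norm_num)
  intro u hu
  have h1 : (0:ℝ) ≤ u := hu.1
  positivity

lemma KK_le (n a s : ℕ) (hn : 1 ≤ n) : KK n a s ≤ 1 / (n:ℝ) ^ s := by
  have hn' : (1:ℝ) ≤ (n:ℝ) := by exact_mod_cast hn
  have : KK n a s ≤ ∫ u in (0:ℝ)..1, 1 / (n:ℝ) ^ s := by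
    apply intervalIntegral.integral_mono_on (by norm_num) (KK_intble n a s hn)
      (intervalIntegrable_const)
    intro u hu
    have h0 : (0:ℝ) < (n:ℝ) ^ s := by positivity
    have h1 : (n:ℝ) ^ s ≤ (u + n) ^ s := by
      apply pow_le_pow_left₀ (by linarith) (by linarith [hu.1])
    have h2 : u ^ a ≤ 1 := pow_le_one₀ hu.1 hu.2
    have h3 : (0:ℝ) < (u + n) ^ s := by nlinarith [hu.1]
    calc u ^ a / (u + n) ^ s ≤ 1 / (u + n) ^ s := by gcongr
      _ ≤ 1 / (n:ℝ) ^ s := by gcongr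
  simpa using this

lemma summable_KK (a s : ℕ) (hs : 2 ≤ s) : Summable (fun n : ℕ => KK (n+1) a s) := by
  apply Summable.of_nonneg_of_le (fun n => KK_nonneg _ _ _)
    (fun n => (KK_le (n+1) a s (by omega)).trans ?_)
  · exact (summable_nat_add_iff 1).mpr (Real.summable_one_div_nat_pow.mpr one_lt_two)
  · push_cast
    apply one_div_le_one_div_of_le (by positivity)
    exact pow_le_pow_right₀ (by norm_num) hs

lemma summable_invpow (t : ℕ) (ht : 2 ≤ t) : Summable (fun n : ℕ => 1 / ((n:ℝ)+1) ^ t) := by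
  apply Summable.of_nonneg_of_le (fun n => by positivity) (fun n => ?_)
  · exact (summable_nat_add_iff 1).mpr (Real.summable_one_div_nat_pow.mpr one_lt_two)
  · push_cast
    apply one_div_le_one_div_of_le (by positivity)
    exact pow_le_pow_right₀ (by norm_num) ht

lemma zeta_re_eq (t : ℕ) (ht : 2 ≤ t) :
    (riemannZeta t).re = ∑' n : ℕ, 1 / ((n:ℝ)+1) ^ t := by
  have h1 : (1:ℝ) < Complex.re (t:ℂ) := by
    simp only [Complex.natCast_re]
    exact_mod_cast ht
  rw [zeta_eq_tsum_one_div_nat_add_one_cpow h1]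
  have heq : ∀ n : ℕ, (1 : ℂ) / ((n:ℂ) + 1) ^ (t:ℂ) = ((1 / ((n:ℝ)+1) ^ t : ℝ) : ℂ) := by
    intro n
    rw [Complex.cpow_natCast]
    push_cast
    ring
  rw [tsum_congr heq, ← Complex.ofReal_tsum, Complex.ofReal_re]

lemma tail_eq (t : ℕ) (ht : 2 ≤ t) :
    ∑' n : ℕ, 1 / ((n:ℝ)+2) ^ t = (riemannZeta t).re - 1 := by
  rw [zeta_re_eq t ht, Summable.tsum_eq_zero_add (summable_invpow t ht)]
  have : ∀ n : ℕ, 1 / ((n:ℝ)+1+1) ^ t = 1 / ((n:ℝ)+2) ^ t := by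
    intro n; norm_num; ring_nf
  push_cast
  rw [tsum_congr this]
  norm_num

lemma KK_base (n s : ℕ) (hn : 1 ≤ n) :
    KK n 0 (s+2) = (1/((s:ℝ)+1)) * (1/(n:ℝ)^(s+1) - 1/((n:ℝ)+1)^(s+1)) := by
  have hn' : (1:ℝ) ≤ (n:ℝ) := by exact_mod_cast hn
  have key : ∀ u ∈ Set.uIcc (0:ℝ) 1,
      HasDerivAt (fun u : ℝ => -(((s:ℝ)+1)⁻¹ * ((u + n) ^ (s+1))⁻¹))
        (u ^ 0 / (u + n) ^ (s+2)) u := by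
    intro u hu
    rw [Set.uIcc_of_le (by norm_num)] at hu
    have hx : (0:ℝ) < u + n := by nlinarith [hu.1]
    have h1 : HasDerivAt (fun u : ℝ => (u + (n:ℝ)) ^ (s+1))
        (((s:ℕ)+1 : ℕ) * (u + n) ^ s * 1) u := by
      exact (((hasDerivAt_id u).add_const (n:ℝ)).pow (s+1)).congr_deriv (by norm_num)
    have h2 := h1.inv (by positivity)
    have h3 := (h2.const_mul (((s:ℝ)+1)⁻¹)).neg
    refine h3.congr_deriv (Eq.symm ?_)
    field_simp
    push_cast
    ring
  rw [KK, intervalIntegral.integral_eq_sub_of_hasDerivAt key]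
  · push_cast
    field_simp
    ring
  · apply ContinuousOn.intervalIntegrable
    rw [Set.uIcc_of_le (by norm_num)]
    apply ContinuousOn.div (by fun_prop) (by fun_prop)
    intro u hu
    have : (0:ℝ) < u + n := by nlinarith [hu.1]
    positivity

lemma KK_parts (n a s : ℕ) (hn : 1 ≤ n) :
    ((s:ℝ)+1) * KK n (a+1) (s+2) = ((a:ℝ)+1) * KK n a (s+1) - 1/((n:ℝ)+1)^(s+1) := by
  have hn' : (1:ℝ) ≤ (n:ℝ) := by exact_mod_cast hn
  have key : ∀ u ∈ Set.uIcc (0:ℝ) 1,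
      HasDerivAt (fun u : ℝ => u ^ (a+1) * ((u + n) ^ (s+1))⁻¹)
        (((a:ℝ)+1) * (u ^ a / (u + n) ^ (s+1)) - ((s:ℝ)+1) * (u ^ (a+1) / (u + n) ^ (s+2))) u := by
    intro u hu
    rw [Set.uIcc_of_le (by norm_num)] at hu
    have hx : (0:ℝ) < u + n := by nlinarith [hu.1]
    have h1 : HasDerivAt (fun u : ℝ => (u + (n:ℝ)) ^ (s+1))
        (((s:ℕ)+1 : ℕ) * (u + n) ^ s * 1) u :=
      (((hasDerivAt_id u).add_const (n:ℝ)).pow (s+1)).congr_deriv (by norm_num)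
    have h2 := h1.inv (by positivity)
    have h0 : HasDerivAt (fun u : ℝ => u ^ (a+1)) (((a:ℕ)+1 : ℕ) * u ^ a) u := by
      simpa using hasDerivAt_pow (a+1) u
    have h3 := h0.mul h2
    refine h3.congr_deriv (Eq.symm ?_)
    have hne : (u + (n:ℝ)) ≠ 0 := ne_of_gt hx
    simp only [Pi.inv_apply]
    rw [show (u + (n:ℝ))^(s+2) = (u + (n:ℝ))^s*(u + (n:ℝ))^2 from by ring,
      show (u + (n:ℝ))^(s+1) = (u + (n:ℝ))^s*(u + (n:ℝ)) from by ring]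
    field_simp
    push_cast
    ring
  have hint : IntervalIntegrable
      (fun u : ℝ => ((a:ℝ)+1) * (u ^ a / (u + n) ^ (s+1)) - ((s:ℝ)+1) * (u ^ (a+1) / (u + n) ^ (s+2)))
      volume 0 1 :=
    ((KK_intble n a (s+1) hn).const_mul _).sub ((KK_intble n (a+1) (s+2) hn).const_mul _)
  have := intervalIntegral.integral_eq_sub_of_hasDerivAt key hint
  rw [intervalIntegral.integral_sub ((KK_intble n a (s+1) hn).const_mul _)
      ((KK_intble n (a+1) (s+2) hn).const_mul _),
    intervalIntegral.integral_const_mul, intervalIntegral.integral_const_mul] at this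
  rw [← KK, ← KK] at this
  simp only [one_pow, zero_pow (Nat.succ_ne_zero a), zero_mul, sub_zero, one_mul] at this
  rw [add_comm (1:ℝ) (n:ℝ), ← one_div] at this
  linarith

lemma telescope_tsum (p : ℕ) :
    ∑' n : ℕ, (1/((n:ℝ)+1)^(p+1) - 1/((n:ℝ)+2)^(p+1)) = 1 := by
  set f : ℕ → ℝ := fun n => 1/((n:ℝ)+1)^(p+1) with hf
  have hmono : ∀ n : ℕ, f (n+1) ≤ f n := by
    intro n
    apply one_div_le_one_div_of_le (by positivity)
    apply pow_le_pow_left₀ (by positivity) (by push_cast; linarith)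
  have hterm : ∀ n : ℕ, 1/((n:ℝ)+2)^(p+1) = f (n+1) := by
    intro n; simp only [hf]; push_cast; ring_nf
  have h0 : ∀ i, 0 ≤ f i - f (i+1) := fun i => sub_nonneg.mpr (hmono i)
  have hlim : Filter.Tendsto f Filter.atTop (nhds 0) := by
    apply squeeze_zero (fun n => by positivity) (g := fun n : ℕ => 1/((n:ℝ)+1))
    · intro n
      apply one_div_le_one_div_of_le (by positivity)
      calc ((n:ℝ)+1) = ((n:ℝ)+1)^1 := (pow_one _).symm
        _ ≤ ((n:ℝ)+1)^(p+1) := pow_le_pow_right₀ (by linarith [Nat.cast_nonneg (α := ℝ) n]) (by omega)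
    · exact tendsto_one_div_add_atTop_nhds_zero_nat
  have key : HasSum (fun n => f n - f (n+1)) 1 := by
    rw [hasSum_iff_tendsto_nat_of_nonneg h0]
    have : ∀ N, ∑ i ∈ Finset.range N, (f i - f (i+1)) = f 0 - f N :=
      fun N => Finset.sum_range_sub' f N
    simp_rw [this]
    have hf0 : f 0 = 1 := by simp [hf]
    rw [← hf0]
    simpa using (tendsto_const_nhds (x := f 0)).sub hlim
  calc ∑' n : ℕ, (1/((n:ℝ)+1)^(p+1) - 1/((n:ℝ)+2)^(p+1))
      = ∑' n : ℕ, (f n - f (n+1)) := by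
        apply tsum_congr; intro n; rw [hterm n]
    _ = 1 := key.tsum_eq

noncomputable def GG (p a : ℕ) : ℝ := ∑' n : ℕ, KK (n+1) a (a+p+2)


lemma summable_invpow2 (t : ℕ) (ht : 2 ≤ t) : Summable (fun n : ℕ => 1 / ((n:ℝ)+2) ^ t) := by
  have := (summable_nat_add_iff 1).mpr (summable_invpow t ht)
  apply this.congr
  intro n; push_cast; ring_nf

lemma GG_base (p : ℕ) : GG p 0 = 1/((p:ℝ)+1) := by
  unfold GG
  have h : ∀ n : ℕ, KK (n+1) 0 (0+p+2) =
      (1/((p:ℝ)+1)) * (1/((n:ℝ)+1)^(p+1) - 1/((n:ℝ)+2)^(p+1)) := by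
    intro n
    have := KK_base (n+1) p (by omega)
    rw [show 0+p+2 = p+2 from by omega, this]
    push_cast
    ring_nf
  rw [tsum_congr h, tsum_mul_left, telescope_tsum p, mul_one]

lemma GG_rec (p a : ℕ) :
    ((a:ℝ)+(p:ℝ)+2) * GG p (a+1) = ((a:ℝ)+1) * GG p a - ((riemannZeta (a+p+2)).re - 1) := by
  unfold GG
  have h : ∀ n : ℕ, ((a:ℝ)+(p:ℝ)+2) * KK (n+1) (a+1) (a+1+p+2) =
      ((a:ℝ)+1) * KK (n+1) a (a+p+2) - 1/((n:ℝ)+2)^(a+p+2) := by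
    intro n
    have := KK_parts (n+1) a (a+p+1) (by omega)
    rw [show a+1+p+2 = (a+p+1)+2 from by omega]
    push_cast at this ⊢
    rw [show (a:ℝ)+(p:ℝ)+2 = ((a:ℝ)+(p:ℝ)+1)+1 from by ring]
    rw [this, show (a+p+1)+1 = a+p+2 from by omega]
    ring_nf
  rw [← tsum_mul_left, tsum_congr h, Summable.tsum_sub ((summable_KK a (a+p+2) (by omega)).mul_left _)
    (summable_invpow2 (a+p+2) (by omega)), tsum_mul_left, tail_eq (a+p+2) (by omega)]
  push_cast
  ring

lemma GG_closed (p a : ℕ) : GG p a =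
    ((a.factorial : ℝ) * p.factorial) / (a+p+1).factorial -
      ∑ r ∈ Finset.Icc 1 a, ((a.factorial : ℝ) * (r+p).factorial /
        ((r.factorial : ℝ) * (a+p+1).factorial)) * ((riemannZeta (r+p+1)).re - 1) := by
  induction a with
  | zero =>
    rw [GG_base]
    simp [Nat.factorial_succ]
    field_simp
  | succ a ih =>
    have hrec := GG_rec p a
    have hpos : ((a:ℝ)+(p:ℝ)+2) ≠ 0 := by positivity
    have hGG : GG p (a+1) = (((a:ℝ)+1) * GG p a - ((riemannZeta ((a:ℂ)+(p:ℂ)+2)).re - 1)) / ((a:ℝ)+(p:ℝ)+2) := by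
      field_simp
      push_cast at hrec
      linarith [hrec]
    have hfact : ((a+1+p+1).factorial : ℝ) = ((a:ℝ)+(p:ℝ)+2) * ((a+p+1).factorial : ℝ) := by
      rw [show a+1+p+1 = (a+p+1)+1 from by omega, Nat.factorial_succ]
      push_cast; ring
    have hfact2 : ((a+1).factorial : ℝ) = ((a:ℝ)+1) * (a.factorial : ℝ) := by
      rw [Nat.factorial_succ]; push_cast; ring
    have hne : ((a+p+1).factorial : ℝ) ≠ 0 := by positivity
    have h1 : ((a+1).factorial : ℝ) * p.factorial / (a+1+p+1).factorial
        = (((a:ℝ)+1) * (((a.factorial : ℝ) * p.factorial) / (a+p+1).factorial)) / ((a:ℝ)+(p:ℝ)+2) := by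
      rw [hfact, hfact2]; field_simp
    have h2 : ∀ r ∈ Finset.Icc 1 a,
        ((a+1).factorial : ℝ) * (r+p).factorial / ((r.factorial : ℝ) * (a+1+p+1).factorial) * ((riemannZeta ((r:ℂ)+(p:ℂ)+1)).re - 1)
        = (((a:ℝ)+1) * ((((a.factorial : ℝ) * (r+p).factorial) / ((r.factorial : ℝ) * (a+p+1).factorial)) * ((riemannZeta ((r:ℂ)+(p:ℂ)+1)).re - 1))) / ((a:ℝ)+(p:ℝ)+2) := by
      intro r hr
      have h4 : ((r.factorial : ℝ)) ≠ 0 := by positivity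
      rw [hfact, hfact2]; field_simp
    have hz : riemannZeta (((a+1 : ℕ):ℂ) + (p:ℂ) + 1) = riemannZeta ((a:ℂ)+(p:ℂ)+2) := by
      congr 1; push_cast; ring
    have h5 : ((a+1).factorial : ℝ) * ((a+1)+p).factorial / (((a+1).factorial : ℝ) * (a+1+p+1).factorial) * ((riemannZeta (((a+1 : ℕ):ℂ)+(p:ℂ)+1)).re - 1)
        = ((riemannZeta ((a:ℂ)+(p:ℂ)+2)).re - 1) / ((a:ℝ)+(p:ℝ)+2) := by
      rw [hz, hfact, show (a+1)+p = a+p+1 from by omega]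
      have h6 : ((a+1).factorial : ℝ) ≠ 0 := by positivity
      field_simp
    rw [hGG, ih, Finset.sum_Icc_succ_top (by omega : 1 ≤ a+1), h1, h5,
      Finset.sum_congr rfl h2]
    rw [mul_sub, sub_div, sub_div, Finset.mul_sum, Finset.sum_div]
    ring

lemma piece_cov (n m k : ℕ) (hn : 1 ≤ n) (hk : m ≤ k) :
    ∫ x in (1/((n:ℝ)+1))..(1/(n:ℝ)), x ^ (k-m) * (1 - n*x) ^ m = KK n m (k+2) := by
  have hn' : (1:ℝ) ≤ (n:ℝ) := by exact_mod_cast hn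
  have hf : ∀ u ∈ Set.uIcc (0:ℝ) 1, HasDerivAt (fun u : ℝ => (u + (n:ℝ))⁻¹)
      (-(((u + (n:ℝ))^2)⁻¹)) u := by
    intro u hu
    rw [Set.uIcc_of_le (by norm_num)] at hu
    have hx : (0:ℝ) < u + n := by nlinarith [hu.1]
    have h1 : HasDerivAt (fun u : ℝ => u + (n:ℝ)) 1 u := (hasDerivAt_id u).add_const _
    have h2 := h1.inv (ne_of_gt hx)
    refine h2.congr_deriv (Eq.symm ?_)
    rw [neg_div, one_div]
  have hf' : ContinuousOn (fun u : ℝ => -(((u + (n:ℝ))^2)⁻¹)) (Set.uIcc 0 1) := by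
    rw [Set.uIcc_of_le (by norm_num)]
    apply ContinuousOn.neg
    apply ContinuousOn.inv₀ (by fun_prop)
    intro u hu
    have hx : (0:ℝ) < u + n := by nlinarith [hu.1]
    positivity
  have hg : Continuous (fun x : ℝ => x ^ (k-m) * (1 - n*x) ^ m) := by fun_prop
  have cov := intervalIntegral.integral_comp_smul_deriv hf hf' hg
  simp only [Function.comp] at cov
  have lhs_eq : ∀ u ∈ Set.uIcc (0:ℝ) 1,
      (-(((u + (n:ℝ))^2)⁻¹)) • ((fun x : ℝ => x ^ (k-m) * (1 - n*x) ^ m) ((u + (n:ℝ))⁻¹))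
      = -(u ^ m / (u + n) ^ (k+2)) := by
    intro u hu
    rw [Set.uIcc_of_le (by norm_num)] at hu
    have hx : (0:ℝ) < u + n := by nlinarith [hu.1]
    have hxne : (u + (n:ℝ)) ≠ 0 := ne_of_gt hx
    simp only [smul_eq_mul]
    have h2 : (1 - (n:ℝ) * (u + (n:ℝ))⁻¹) = u / (u + n) := by
      field_simp
      ring
    rw [h2, inv_pow, div_pow, ← one_div ((u+(n:ℝ))^(k-m))]
    rw [div_mul_div_comm, one_mul]
    rw [neg_mul, neg_inj]
    have e : (u+(n:ℝ))^(k-m)*(u+(n:ℝ))^m = (u+(n:ℝ))^k := by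
      rw [← pow_add]; congr 1; omega
    rw [e, show k+2 = 2+k from by omega, pow_add]
    field_simp
  rw [intervalIntegral.integral_congr lhs_eq, intervalIntegral.integral_neg] at cov
  rw [KK, intervalIntegral.integral_symm]
  rw [show (1:ℝ)/(n:ℝ) = ((0:ℝ)+(n:ℝ))⁻¹ from by norm_num,
    show (1:ℝ)/((n:ℝ)+1) = ((1:ℝ)+(n:ℝ))⁻¹ from by rw [one_div, add_comm], ← cov]
  exact neg_neg _

lemma piece_congr (n m k : ℕ) (hn : 1 ≤ n) (hk : m ≤ k) :
    ∫ x in (1/((n:ℝ)+1))..(1/(n:ℝ)), x ^ k * (Int.fract (1/x)) ^ m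
      = ∫ x in (1/((n:ℝ)+1))..(1/(n:ℝ)), x ^ (k-m) * (1 - n*x) ^ m := by
  have hn' : (1:ℝ) ≤ (n:ℝ) := by exact_mod_cast hn
  have hab : (1:ℝ)/((n:ℝ)+1) ≤ 1/(n:ℝ) := by
    apply one_div_le_one_div_of_le (by linarith) (by linarith)
  apply intervalIntegral.integral_congr_ae
  have h1 : ∀ᵐ (x:ℝ), x ≠ 1/(n:ℝ) := by
    rw [ae_iff]
    have : {x : ℝ | ¬ x ≠ 1/(n:ℝ)} = {1/(n:ℝ)} := by ext x; simp
    rw [this]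
    exact Real.volume_singleton
  filter_upwards [h1] with x hx hmem
  rw [Set.uIoc_of_le hab] at hmem
  have hxb : x < 1/(n:ℝ) := lt_of_le_of_ne hmem.2 hx
  have hxa : 1/((n:ℝ)+1) < x := hmem.1
  have hx0 : (0:ℝ) < x := lt_trans (by positivity) hxa
  have hub : 1/x < (n:ℝ)+1 := by
    have := one_div_lt_one_div_of_lt (by positivity : (0:ℝ) < 1/((n:ℝ)+1)) hxa
    rwa [one_div_one_div] at this
  have hlb : (n:ℝ) < 1/x := by
    have := one_div_lt_one_div_of_lt hx0 hxb
    rwa [one_div_one_div] at this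
  have hfloor : ⌊1/x⌋ = (n:ℤ) := by
    rw [Int.floor_eq_iff]
    constructor
    · push_cast; linarith
    · push_cast; linarith
  have hfract : Int.fract (1/x) = 1/x - n := by
    rw [← Int.self_sub_floor, hfloor]
    push_cast; ring
  rw [hfract]
  have hpow : x ^ k = x ^ (k-m) * x ^ m := by
    rw [← pow_add]; congr 1; omega
  rw [hpow, mul_assoc, ← mul_pow]
  congr 2
  field_simp

lemma f_meas (m k : ℕ) : Measurable (fun x : ℝ => x ^ k * (Int.fract (1/x)) ^ m) := by
  have h1 : Measurable (fun x : ℝ => 1/x) := by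
    simpa [one_div] using (measurable_inv : Measurable (fun x : ℝ => x⁻¹))
  exact (measurable_id.pow_const k).mul (h1.fract.pow_const m)

lemma f_intble (m k : ℕ) :
    IntegrableOn (fun x : ℝ => x ^ k * (Int.fract (1/x)) ^ m) (Set.Ioc 0 1) := by
  apply Integrable.mono' (integrable_const (1:ℝ))
    ((f_meas m k).aestronglyMeasurable)
  rw [ae_restrict_iff' measurableSet_Ioc]
  filter_upwards with x hx
  have hx0 : 0 < x := hx.1
  have h1 : x ^ k ≤ 1 := pow_le_one₀ (le_of_lt hx0) hx.2
  have h2 : (Int.fract (1/x)) ^ m ≤ 1 := pow_le_one₀ (Int.fract_nonneg _) (le_of_lt (Int.fract_lt_one _))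
  rw [Real.norm_eq_abs, abs_of_nonneg (mul_nonneg (pow_nonneg hx0.le k) (pow_nonneg (Int.fract_nonneg _) m))]
  calc x ^ k * (Int.fract (1/x)) ^ m ≤ 1 * 1 :=
        mul_le_mul h1 h2 (pow_nonneg (Int.fract_nonneg _) m) zero_le_one
    _ = 1 := by norm_num

lemma decomp (m k : ℕ) :
    ∫ x in (0:ℝ)..1, x ^ k * (Int.fract (1/x)) ^ m
      = ∑' n : ℕ, ∫ x in (1/((n:ℝ)+2))..(1/((n:ℝ)+1)), x ^ k * (Int.fract (1/x)) ^ m := by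
  set s : ℕ → Set ℝ := fun n => Set.Ioc (1/((n:ℝ)+2)) (1/((n:ℝ)+1)) with hs
  have hmeas : ∀ n, MeasurableSet (s n) := fun n => measurableSet_Ioc
  have hdisj : Pairwise (Function.onFun Disjoint s) := by
    intro i j hij
    have key : ∀ i j : ℕ, i < j → Disjoint (s i) (s j) := by
      intro i j h
      rw [hs]
      simp only
      rw [Set.Ioc_disjoint_Ioc]
      have h2 : (1:ℝ)/((j:ℝ)+1) ≤ 1/((i:ℝ)+2) := by
        apply one_div_le_one_div_of_le (by positivity)
        have : (i:ℝ) + 1 ≤ (j:ℝ) := by exact_mod_cast h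
        linarith
      calc min (1/((i:ℝ)+1)) (1/((j:ℝ)+1)) ≤ 1/((j:ℝ)+1) := min_le_right _ _
        _ ≤ 1/((i:ℝ)+2) := h2
        _ ≤ max (1/((i:ℝ)+2)) (1/((j:ℝ)+2)) := le_max_left _ _
    rcases lt_or_gt_of_ne hij with h | h
    · exact key i j h
    · exact (key j i h).symm
  have hunion : (⋃ n, s n) = Set.Ioc (0:ℝ) 1 := by
    ext x
    simp only [Set.mem_iUnion, hs, Set.mem_Ioc]
    constructor
    · rintro ⟨n, h1, h2⟩
      refine ⟨lt_trans (by positivity) h1, le_trans h2 ?_⟩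
      rw [div_le_one (by positivity)]
      linarith [Nat.cast_nonneg (α := ℝ) n]
    · rintro ⟨h1, h2⟩
      have hx1 : (1:ℝ) ≤ 1/x := by
        rw [le_div_iff₀ h1]; linarith
      set t := ⌊1/x⌋₊ with ht
      have ht1 : 1 ≤ t := Nat.le_floor (by exact_mod_cast hx1)
      have htpos : (0:ℝ) < t := by exact_mod_cast ht1
      have hfl : (t:ℝ) ≤ 1/x := Nat.floor_le (by positivity)
      have hfu : 1/x < (t:ℝ) + 1 := Nat.lt_floor_add_one _
      refine ⟨t-1, ?_, ?_⟩
      · rw [Nat.cast_sub ht1]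
        push_cast
        have := one_div_lt_one_div_of_lt (by positivity : (0:ℝ) < 1/x) hfu
        rw [one_div_one_div] at this
        rw [show (t:ℝ)-1+2 = (t:ℝ)+1 from by ring]
        exact this
      · rw [Nat.cast_sub ht1]
        push_cast
        have := one_div_le_one_div_of_le htpos hfl
        rw [one_div_one_div] at this
        rw [show (t:ℝ)-1+1 = (t:ℝ) from by ring]
        exact this
  rw [intervalIntegral.integral_of_le (by norm_num : (0:ℝ) ≤ 1), ← hunion,
    integral_iUnion hmeas hdisj (hunion ▸ f_intble m k)]
  apply tsum_congr
  intro n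
  rw [intervalIntegral.integral_of_le]
  apply one_div_le_one_div_of_le (by positivity)
  linarith [Nat.cast_nonneg (α := ℝ) n]
lemma piece (n m k : ℕ) (hk : m ≤ k) :
    ∫ x in (1/((n:ℝ)+2))..(1/((n:ℝ)+1)), x ^ k * (Int.fract (1/x)) ^ m
      = KK (n+1) m (k+2) := by
  have e1 := piece_congr (n+1) m k (by omega) hk
  have e2 := piece_cov (n+1) m k (by omega) hk
  push_cast at e1 e2
  rw [show (n:ℝ)+2 = (n:ℝ)+1+1 from by ring, e1, e2]

theorem fractional_moment_pow_high (m k : ℕ) (hm : 1 ≤ m) (hk : m ≤ k) :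
    ∫ x in (0:ℝ)..1, x ^ k * (Int.fract (1 / x)) ^ m =
      1 / ((k : ℝ) + 1 - m) -
        (1 / (((k : ℝ) + 1) * (k.choose m : ℝ))) *
          ∑ j ∈ Finset.Icc (k - m + 1) k, (j.choose (k - m) : ℝ) * (riemannZeta ((j : ℂ) + 1)).re := by
  obtain ⟨p, rfl⟩ : ∃ p, k = m + p := ⟨k - m, by omega⟩
  have hI : ∫ x in (0:ℝ)..1, x ^ (m+p) * (Int.fract (1 / x)) ^ m = GG p m := by
    rw [decomp m (m+p)]
    exact tsum_congr (fun n => piece n m (m+p) (by omega))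
  rw [hI, GG_closed]
  -- notation
  have hmp : m + p - m = p := by omega
  rw [hmp]
  set CC : ℝ := 1 / ((((m+p:ℕ) : ℝ) + 1) * ((m+p).choose m : ℝ)) with hCC
  have hchoosepos : 0 < ((m+p).choose m : ℝ) := by
    exact_mod_cast Nat.choose_pos (by omega)
  have hfa : ∀ j : ℕ, (0:ℝ) < (j.factorial : ℝ) := fun j => by
    exact_mod_cast j.factorial_pos
  have hCCeq : CC = ((m.factorial : ℝ) * p.factorial) / ((m+p+1).factorial : ℝ) := by
    rw [hCC]
    have h1 : (m+p).choose m * m.factorial * p.factorial = (m+p).factorial := by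
      have := Nat.choose_mul_factorial_mul_factorial (show m ≤ m + p from by omega)
      rwa [show m + p - m = p from by omega] at this
    have h2 : ((m+p+1).factorial : ℝ) = (((m+p:ℕ):ℝ)+1) * ((m+p).factorial : ℝ) := by
      rw [Nat.factorial_succ]; push_cast; ring
    have h1' : ((m+p).choose m : ℝ) * (m.factorial : ℝ) * (p.factorial : ℝ)
        = ((m+p).factorial : ℝ) := by exact_mod_cast h1
    rw [h2]
    field_simp
    nlinarith [h1', hfa (m+p), hchoosepos]
  -- reindex target sum
  have hIcc : Finset.Icc (p+1) (m+p) = (Finset.Icc 1 m).map (addRightEmbedding p) := by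
    rw [Finset.map_add_right_Icc]
    congr 1
    omega
  rw [hIcc, Finset.sum_map]
  simp only [addRightEmbedding_apply]
  -- pointwise coefficient identity
  have hcoeff : ∀ r ∈ Finset.Icc 1 m,
      ((m.factorial : ℝ) * ((r+p).factorial : ℝ) / ((r.factorial : ℝ) * ((m+p+1).factorial : ℝ)))
        * ((riemannZeta ((r:ℂ)+(p:ℂ)+1)).re - 1)
      = CC * ((r+p).choose p : ℝ) * ((riemannZeta (((r+p:ℕ):ℂ)+1)).re - 1) := by
    intro r hr
    have hz : riemannZeta ((r:ℂ)+(p:ℂ)+1) = riemannZeta (((r+p:ℕ):ℂ)+1) := by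
      congr 1; push_cast; ring
    rw [hz, hCCeq]
    have h1 : (r+p).choose p * p.factorial * r.factorial = (r+p).factorial := by
      have := Nat.choose_mul_factorial_mul_factorial (show p ≤ r + p from by omega)
      rwa [show r + p - p = r from by omega] at this
    have h1' : ((r+p).choose p : ℝ) * (p.factorial : ℝ) * (r.factorial : ℝ)
        = ((r+p).factorial : ℝ) := by exact_mod_cast h1
    rw [← h1']
    field_simp
  rw [Finset.sum_congr rfl hcoeff]
  -- zeta terms on RHS : rewrite to (z - 1) + 1 form not needed; instead expand
  have hzsum : ∀ r ∈ Finset.Icc 1 m,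
      (((r+p).choose p : ℝ)) * (riemannZeta (((r+p:ℕ):ℂ)+1)).re
      = ((r+p).choose p : ℝ) * ((riemannZeta (((r+p:ℕ):ℂ)+1)).re - 1) + ((r+p).choose p : ℝ) := by
    intro r hr; ring
  rw [Finset.sum_congr rfl hzsum, Finset.sum_add_distrib, mul_add, mul_comm CC]
  have hsplit : ∀ r ∈ Finset.Icc 1 m,
      CC * ((r+p).choose p : ℝ) * ((riemannZeta (((r+p:ℕ):ℂ)+1)).re - 1)
      = CC * (((r+p).choose p : ℝ) * ((riemannZeta (((r+p:ℕ):ℂ)+1)).re - 1)) := by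
    intro r hr; ring
  rw [Finset.sum_congr rfl hsplit, ← Finset.mul_sum]
  -- constant identity
  have hhock : (1 : ℕ) + ∑ r ∈ Finset.Icc 1 m, (r+p).choose p = (m+p+1).choose (p+1) := by
    have h0 : ∑ j ∈ Finset.Icc p (m+p), j.choose p = (m+p+1).choose (p+1) :=
      Nat.sum_Icc_choose (m+p) p
    have h1 : Finset.Icc p (m+p) = insert p (Finset.Icc (p+1) (m+p)) := by
      ext x; simp [Finset.mem_Icc, Finset.mem_insert]; omega
    rw [h1, Finset.sum_insert (by simp [Finset.mem_Icc])] at h0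
    rw [hIcc, Finset.sum_map] at h0
    simp only [addRightEmbedding_apply] at h0
    rw [← h0, Nat.choose_self]
  have hconst : ((m.factorial : ℝ) * p.factorial) / ((m+p+1).factorial : ℝ)
      + CC * ∑ r ∈ Finset.Icc 1 m, ((r+p).choose p : ℝ) = 1 / (((m+p:ℕ):ℝ) + 1 - (m:ℝ)) := by
    have hc : ((m+p+1).choose (p+1) : ℝ) * ((p+1).factorial : ℝ) * (m.factorial : ℝ)
        = ((m+p+1).factorial : ℝ) := by
      have := Nat.choose_mul_factorial_mul_factorial (show p+1 ≤ m+p+1 from by omega)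
      rw [show m+p+1-(p+1) = m from by omega] at this
      exact_mod_cast this
    have hsum : (∑ r ∈ Finset.Icc 1 m, ((r+p).choose p : ℝ))
        = ((m+p+1).choose (p+1) : ℝ) - 1 := by
      have : ((1:ℕ):ℝ) + (((∑ r ∈ Finset.Icc 1 m, (r+p).choose p : ℕ)):ℝ)
          = ((m+p+1).choose (p+1) : ℝ) := by exact_mod_cast congrArg (Nat.cast (R := ℝ)) hhock
      push_cast at this ⊢
      linarith
    rw [hsum, hCCeq]
    have hd : (((m+p:ℕ):ℝ) + 1 - (m:ℝ)) = (p:ℝ)+1 := by push_cast; ring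
    rw [hd]
    have hfac1 : ((p+1).factorial : ℝ) = ((p:ℝ)+1) * (p.factorial : ℝ) := by
      rw [Nat.factorial_succ]; push_cast; ring
    rw [← hc, hfac1]
    have c1 := hfa p
    have c2 := hfa m
    have c3 : (0:ℝ) < ((m+p+1).choose (p+1) : ℝ) := by
      exact_mod_cast Nat.choose_pos (by omega)
    field_simp
    ring
  rw [← hconst]
  ring
end

section
/- For every integer m ≥ 1, ∫₀¹ x^{m−1} {1/x}^m dx = H_m − γ − Σ_{j=1}^{m−1} ζ(j+1)/(j+1), where H_m = Σ_{i=1}^{m} 1/i is the m-th harmonic number, γ is the Euler–Mascheroni constant, and ζ is the Riemann zeta function (an empty sum is taken to be zero). -/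
open MeasureTheory Real Filter Topology intervalIntegral

lemma meas_g (p q : ℕ) : Measurable (fun x : ℝ => x ^ p * Int.fract (1/x) ^ q) :=
  (measurable_id.pow_const p).mul (((measurable_const.div measurable_id).fract).pow_const q)

lemma meas_h (p : ℕ) :
    Measurable (fun x : ℝ => x ^ p * (⌊1/x⌋ : ℝ) * Int.fract (1/x) ^ p) :=
  (((measurable_id.pow_const p)).mul
    (measurable_from_top.comp ((measurable_const.div measurable_id).floor))).mul
    (((measurable_const.div measurable_id).fract).pow_const p)

lemma fract_nonneg' (y : ℝ) : 0 ≤ Int.fract y := Int.fract_nonneg y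

lemma intInt_g (p q : ℕ) :
    IntervalIntegrable (fun x : ℝ => x ^ p * Int.fract (1/x) ^ q) volume 0 1 := by
  rw [intervalIntegrable_iff_integrableOn_Ioc_of_le (by norm_num)]
  refine ⟨(meas_g p q).aestronglyMeasurable.restrict, ?_⟩
  apply HasFiniteIntegral.restrict_of_bounded (C := 1) (measure_Ioc_lt_top)
  refine (ae_restrict_iff' measurableSet_Ioc).2 (ae_of_all _ fun x hx => ?_)
  have h0 : (0:ℝ) < x := hx.1
  have h1 : x ≤ 1 := hx.2
  rw [Real.norm_eq_abs, abs_mul, abs_pow, abs_pow, abs_of_pos h0,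
    abs_of_nonneg (fract_nonneg' _)]
  calc x ^ p * Int.fract (1/x) ^ q ≤ 1 * 1 := by
        apply mul_le_mul
        · exact pow_le_one₀ h0.le h1
        · exact pow_le_one₀ (fract_nonneg' _) (Int.fract_lt_one _).le
        · exact pow_nonneg (fract_nonneg' _) q
        · norm_num
    _ = 1 := by norm_num


lemma intInt_h (p : ℕ) (hp : 1 ≤ p) :
    IntervalIntegrable (fun x : ℝ => x ^ p * (⌊1/x⌋ : ℝ) * Int.fract (1/x) ^ p)
      volume 0 1 := by
  rw [intervalIntegrable_iff_integrableOn_Ioc_of_le (by norm_num)]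
  have hmeas : Measurable (fun x : ℝ => x ^ p * (⌊1/x⌋ : ℝ) * Int.fract (1/x) ^ p) :=
    (((measurable_id.pow_const p)).mul
      (measurable_from_top.comp ((measurable_const.div measurable_id).floor))).mul
      (((measurable_const.div measurable_id).fract).pow_const p)
  refine ⟨hmeas.aestronglyMeasurable.restrict, ?_⟩
  apply HasFiniteIntegral.restrict_of_bounded (C := 1) (measure_Ioc_lt_top)
  refine (ae_restrict_iff' measurableSet_Ioc).2 (ae_of_all _ fun x hx => ?_)
  have h0 : (0:ℝ) < x := hx.1
  have h1 : x ≤ 1 := hx.2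
  have hfl : (0:ℝ) ≤ (⌊1/x⌋ : ℝ) := by
    have : (0:ℤ) ≤ ⌊1/x⌋ := Int.floor_nonneg.2 (by positivity)
    exact_mod_cast this
  have hfl2 : (⌊1/x⌋ : ℝ) ≤ 1/x := Int.floor_le _
  have key : x ^ p * (⌊1/x⌋ : ℝ) ≤ 1 := by
    calc x ^ p * (⌊1/x⌋ : ℝ) ≤ x ^ p * (1/x) := by
          apply mul_le_mul_of_nonneg_left hfl2 (by positivity)
      _ = x ^ (p-1) := by
          rw [mul_one_div]
          rw [eq_comm, eq_div_iff h0.ne', ← pow_succ]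
          congr 1
          omega
      _ ≤ 1 := pow_le_one₀ h0.le h1
  rw [Real.norm_eq_abs, abs_mul, abs_mul, abs_pow, abs_pow, abs_of_pos h0,
    abs_of_nonneg hfl, abs_of_nonneg (Int.fract_nonneg _)]
  calc x ^ p * (⌊1/x⌋:ℝ) * Int.fract (1/x) ^ p ≤ 1 * 1 := by
        apply mul_le_mul key
        · exact pow_le_one₀ (Int.fract_nonneg _) (Int.fract_lt_one _).le
        · exact pow_nonneg (Int.fract_nonneg _) p
        · norm_num
    _ = 1 := by norm_num


-- On Ioc (1/(n+2)) (1/(n+1)), floor (1/x) = n+1 and fract (1/x) = 1/x - (n+1)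
lemma floor_eq_on (n : ℕ) {x : ℝ} (hx : x ∈ Set.Ioc (1/(n+2):ℝ) (1/(n+1))) :
    ⌊1/x⌋ = (n+1 : ℤ) := by
  have hn2 : (0:ℝ) < n + 2 := by positivity
  have hn1 : (0:ℝ) < n + 1 := by positivity
  have hx0 : (0:ℝ) < x := lt_trans (by positivity) hx.1
  refine Int.floor_eq_iff.2 ⟨?_, ?_⟩
  · push_cast
    rw [le_div_iff₀ hx0]
    have := hx.2
    rw [le_div_iff₀ hn1, mul_comm] at this
    linarith
  · push_cast
    rw [div_lt_iff₀ hx0]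
    have := hx.1
    rw [div_lt_iff₀ hn2, mul_comm] at this
    linarith

lemma fract_eq_on (n : ℕ) {x : ℝ} (hx : x ∈ Set.Ioc (1/(n+2):ℝ) (1/(n+1))) :
    Int.fract (1/x) = 1/x - (n+1 : ℝ) := by
  rw [Int.fract, floor_eq_on n hx]
  push_cast
  ring


lemma hab (n : ℕ) : (1/((n:ℝ)+2)) ≤ 1/((n:ℝ)+1) := by
  apply one_div_le_one_div_of_le (by positivity)
  linarith

lemma piece_base (n : ℕ) :
    ∫ x in (1/((n:ℝ)+2))..(1/((n:ℝ)+1)), Int.fract (1/x)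
      = Real.log ((n:ℝ)+2) - Real.log ((n:ℝ)+1) - 1/((n:ℝ)+2) := by
  rw [intervalIntegral.integral_congr_ae (g := fun x => 1/x - ((n:ℝ)+1))
    (ae_of_all _ fun x hx => fract_eq_on n (by rwa [Set.uIoc_of_le (hab n)] at hx))]
  have hmem : ∀ x ∈ Set.uIcc (1/((n:ℝ)+2)) (1/((n:ℝ)+1)), (0:ℝ) < x := by
    intro x hx
    rw [Set.uIcc_of_le (hab n)] at hx
    exact lt_of_lt_of_le (by positivity) hx.1
  have hderiv : ∀ x ∈ Set.uIcc (1/((n:ℝ)+2)) (1/((n:ℝ)+1)),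
      HasDerivAt (fun x => Real.log x - ((n:ℝ)+1) * x) (1/x - ((n:ℝ)+1)) x := by
    intro x hx
    have hx0 := hmem x hx
    exact ((Real.hasDerivAt_log hx0.ne').sub
      ((hasDerivAt_id x).const_mul ((n:ℝ)+1))).congr_deriv (by simp [one_div])
  have hint : IntervalIntegrable (fun x => 1/x - ((n:ℝ)+1)) volume
      (1/((n:ℝ)+2)) (1/((n:ℝ)+1)) := by
    apply ContinuousOn.intervalIntegrable
    exact (continuousOn_const.div continuousOn_id fun x hx => (hmem x hx).ne').sub
      continuousOn_const
  rw [intervalIntegral.integral_eq_sub_of_hasDerivAt hderiv hint]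
  have l1 : Real.log (1/((n:ℝ)+1)) = - Real.log ((n:ℝ)+1) := by
    rw [one_div, Real.log_inv]
  have l2 : Real.log (1/((n:ℝ)+2)) = - Real.log ((n:ℝ)+2) := by
    rw [one_div, Real.log_inv]
  rw [l1, l2]
  have hn1 : ((n:ℝ)+1) ≠ 0 := by positivity
  have hn2 : ((n:ℝ)+2) ≠ 0 := by positivity
  field_simp
  ring

lemma piece_h (p n : ℕ) :
    ∫ x in (1/((n:ℝ)+2))..(1/((n:ℝ)+1)), x^p * (⌊1/x⌋:ℝ) * Int.fract (1/x)^p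
      = (1/((n:ℝ)+2))^(p+1) / ((p:ℝ)+1) := by
  have hcong : ∀ x ∈ Set.uIoc (1/((n:ℝ)+2)) (1/((n:ℝ)+1)),
      x^p * (⌊1/x⌋:ℝ) * Int.fract (1/x)^p = ((n:ℝ)+1) * (1-((n:ℝ)+1)*x)^p := by
    intro x hx
    rw [Set.uIoc_of_le (hab n)] at hx
    have hx0 : (0:ℝ) < x := lt_of_lt_of_le (by positivity) hx.1.le
    rw [floor_eq_on n hx, fract_eq_on n hx]
    push_cast
    rw [show x^p * ((n:ℝ)+1) * (1/x - ((n:ℝ)+1))^p = ((n:ℝ)+1) * (x * (1/x - ((n:ℝ)+1)))^p by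
      rw [mul_pow]; ring]
    congr 2
    field_simp
  rw [intervalIntegral.integral_congr_ae (ae_of_all _ hcong)]
  have hp1 : ((p:ℝ)+1) ≠ 0 := by positivity
  have hF : ∀ x : ℝ, HasDerivAt (fun x : ℝ => -(1-((n:ℝ)+1)*x)^(p+1)/((p:ℝ)+1))
      (((n:ℝ)+1) * (1-((n:ℝ)+1)*x)^p) x := by
    intro x
    have h1 : HasDerivAt (fun x : ℝ => 1-((n:ℝ)+1)*x) (-(((n:ℝ)+1))) x := by
      exact ((hasDerivAt_const x (1:ℝ)).sub ((hasDerivAt_id x).const_mul ((n:ℝ)+1))).congr_deriv (by simp)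
    have h2 := (h1.pow (p+1)).neg.div_const ((p:ℝ)+1)
    refine h2.congr_deriv ?_
    simp only [Nat.add_sub_cancel]
    push_cast
    field_simp
  rw [intervalIntegral.integral_eq_sub_of_hasDerivAt (fun x _ => hF x)
    (Continuous.intervalIntegrable (by fun_prop) _ _)]
  have hn1 : ((n:ℝ)+1) ≠ 0 := by positivity
  have hn2 : ((n:ℝ)+2) ≠ 0 := by positivity
  have e1 : 1 - ((n:ℝ)+1)*(1/((n:ℝ)+1)) = 0 := by field_simp; ring
  have e2 : 1 - ((n:ℝ)+1)*(1/((n:ℝ)+2)) = 1/((n:ℝ)+2) := by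
    field_simp
    norm_num
  rw [e1, e2]
  simp only [zero_pow (Nat.succ_ne_zero p), one_div]
  ring


lemma union_Ioc : ⋃ N : ℕ, Set.Ioc (1/((N:ℝ)+1)) 1 = Set.Ioc (0:ℝ) 1 := by
  ext x
  simp only [Set.mem_iUnion, Set.mem_Ioc]
  constructor
  · rintro ⟨N, h1, h2⟩
    exact ⟨lt_trans (by positivity) h1, h2⟩
  · rintro ⟨h1, h2⟩
    obtain ⟨N, hN⟩ := exists_nat_one_div_lt h1
    exact ⟨N, hN, h2⟩

lemma mem_unit (k : ℕ) : (1/((k:ℝ)+1)) ∈ Set.uIcc (0:ℝ) 1 := by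
  rw [Set.uIcc_of_le (by norm_num : (0:ℝ) ≤ 1)]
  constructor
  · positivity
  · rw [div_le_one (by positivity)]
    linarith [Nat.cast_nonneg (α := ℝ) k]

lemma cast_succ_eq (k : ℕ) : (1:ℝ)/(((k+1:ℕ)):ℝ)+1 = 1/((k:ℝ)+1)+1 := by push_cast; ring

lemma tendsto_pieces (g : ℝ → ℝ) (hg : IntervalIntegrable g volume 0 1) :
    Tendsto (fun N : ℕ => ∑ k ∈ Finset.range N, ∫ x in (1/((k:ℝ)+2))..(1/((k:ℝ)+1)), g x)
      atTop (𝓝 (∫ x in (0:ℝ)..1, g x)) := by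
  have hcast : ∀ k : ℕ, (1:ℝ)/((((k+1:ℕ)):ℝ)+1) = 1/((k:ℝ)+2) := by
    intro k; push_cast; ring_nf
  have hint : ∀ k : ℕ, IntervalIntegrable g volume (1/((k:ℝ)+1)) (1/((k:ℝ)+2)) := by
    intro k
    apply hg.mono_set
    apply Set.uIcc_subset_uIcc (mem_unit k)
    have h2 := mem_unit (k+1)
    rwa [hcast k] at h2
  have hsub : ∀ N : ℕ, ∑ k ∈ Finset.range N, ∫ x in (1/((k:ℝ)+2))..(1/((k:ℝ)+1)), g x
      = ∫ x in (1/((N:ℝ)+1))..1, g x := by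
    intro N
    have key := intervalIntegral.sum_integral_adjacent_intervals
      (a := fun k : ℕ => 1/((k:ℝ)+1)) (n := N) (μ := volume) (f := g)
      (fun k _ => by rw [hcast k]; exact hint k)
    simp only [hcast] at key
    rw [show ∑ k ∈ Finset.range N, ∫ x in (1/((k:ℝ)+2))..(1/((k:ℝ)+1)), g x
        = - ∑ k ∈ Finset.range N, ∫ x in (1/((k:ℝ)+1))..(1/((k:ℝ)+2)), g x by
      rw [← Finset.sum_neg_distrib]
      exact Finset.sum_congr rfl fun k _ => (intervalIntegral.integral_symm _ _)]
    rw [key, ← intervalIntegral.integral_symm]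
    norm_num
  have hmono : Monotone (fun N : ℕ => Set.Ioc (1/((N:ℝ)+1)) 1) := by
    intro N M hNM
    apply Set.Ioc_subset_Ioc_left
    apply one_div_le_one_div_of_le (by positivity)
    have : (N:ℝ) ≤ M := Nat.cast_le.2 hNM
    linarith
  have hIntOn : IntegrableOn g (⋃ N : ℕ, Set.Ioc (1/((N:ℝ)+1)) 1) volume := by
    rw [union_Ioc]
    exact (intervalIntegrable_iff_integrableOn_Ioc_of_le (by norm_num)).1 hg
  have hset := MeasureTheory.tendsto_setIntegral_of_monotone
    (fun N : ℕ => measurableSet_Ioc) hmono hIntOn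
  rw [union_Ioc] at hset
  rw [intervalIntegral.integral_of_le (by norm_num : (0:ℝ) ≤ 1)]
  apply hset.congr
  intro N
  rw [hsub N, intervalIntegral.integral_of_le]
  rw [div_le_one (by positivity)]
  linarith [Nat.cast_nonneg (α := ℝ) N]


lemma harm_sum (N : ℕ) :
    ∑ k ∈ Finset.range N, 1/((k:ℝ)+2) = (harmonic (N+1) : ℝ) - 1 := by
  have : (harmonic (N+1) : ℝ) = ∑ i ∈ Finset.range (N+1), 1/((i:ℝ)+1) := by
    rw [harmonic]
    push_cast
    simp [one_div]
  rw [this, Finset.sum_range_succ' (fun i => 1/((i:ℝ)+1)) N]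
  have : ∀ k : ℕ, (1:ℝ)/((((k+1:ℕ)):ℝ)+1) = 1/((k:ℝ)+2) := by
    intro k; push_cast; ring_nf
  simp only [this]
  norm_num

lemma base_integral :
    ∫ x in (0:ℝ)..1, Int.fract (1/x) = 1 - Real.eulerMascheroniConstant := by
  have hg : IntervalIntegrable (fun x : ℝ => Int.fract (1/x)) volume 0 1 := by
    have := intInt_g 0 1
    simpa using this
  have h := tendsto_pieces _ hg
  have hsum : ∀ N : ℕ,
      ∑ k ∈ Finset.range N, ∫ x in (1/((k:ℝ)+2))..(1/((k:ℝ)+1)), Int.fract (1/x)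
        = 1 - ((harmonic (N+1) : ℝ) - Real.log ((N:ℝ)+1)) := by
    intro N
    rw [Finset.sum_congr rfl (fun k (_ : k ∈ Finset.range N) => piece_base k),
      Finset.sum_sub_distrib]
    have tele := Finset.sum_range_sub (f := fun k : ℕ => Real.log ((k:ℝ)+1)) N
    have tele' : ∑ k ∈ Finset.range N, (Real.log ((k:ℝ)+2) - Real.log ((k:ℝ)+1))
        = Real.log ((N:ℝ)+1) := by
      rw [show Real.log ((N:ℝ)+1) = Real.log ((N:ℝ)+1) - Real.log (((0:ℕ):ℝ)+1) by
        norm_num, ← tele]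
      apply Finset.sum_congr rfl
      intro k _
      congr 2
      push_cast
      ring
    rw [tele', harm_sum N]
    ring
  have lim2 : Tendsto (fun N : ℕ => 1 - ((harmonic (N+1) : ℝ) - Real.log ((N:ℝ)+1)))
      atTop (𝓝 (1 - Real.eulerMascheroniConstant)) := by
    apply Tendsto.const_sub
    have := (Real.tendsto_harmonic_sub_log).comp (tendsto_add_atTop_nat 1)
    apply this.congr
    intro N
    simp
  have h2 := h.congr (fun N => (hsum N))
  exact tendsto_nhds_unique h2 lim2


lemma J_integral (p : ℕ) (hp : 1 ≤ p) :
    ∫ x in (0:ℝ)..1, x^p * (⌊1/x⌋:ℝ) * Int.fract (1/x)^p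
      = ((riemannZeta ((p:ℂ)+1)).re - 1) / ((p:ℝ)+1) := by
  have h := tendsto_pieces _ (intInt_h p hp)
  set f : ℕ → ℝ := fun n => 1/(n:ℝ)^(p+1) with hf_def
  have hf : Summable f := summable_one_div_nat_pow.mpr (by omega)
  have hcast : ∀ k : ℕ, (1/((k:ℝ)+2))^(p+1) = f (k+2) := by
    intro k
    simp only [hf_def]
    push_cast
    rw [div_pow, one_pow]
  have hf2 : Summable (fun k : ℕ => f (k+2) / ((p:ℝ)+1)) :=
    ((summable_nat_add_iff 2).mpr hf).div_const _
  have hT : ∑' k : ℕ, f (k+2) = (∑' n : ℕ, f n) - 1 := by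
    have key := Summable.sum_add_tsum_nat_add (f := f) 2 hf
    have : ∑ i ∈ Finset.range 2, f i = 1 := by
      simp [hf_def, Finset.sum_range_succ, zero_pow (Nat.succ_ne_zero p)]
    linarith [key, this]
  have hz : (riemannZeta ((p:ℂ)+1)).re = ∑' n : ℕ, f n := by
    have hz1 : riemannZeta ((p:ℂ)+1) = ∑' n : ℕ, 1/(n:ℂ)^(p+1) := by
      rw [show ((p:ℂ)+1) = ((p+1:ℕ):ℂ) by push_cast; ring]
      exact zeta_nat_eq_tsum_of_gt_one (by omega)
    have : (fun n : ℕ => 1/(n:ℂ)^(p+1)) = fun n : ℕ => ((f n : ℝ) : ℂ) := by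
      funext n
      simp only [hf_def]
      push_cast
      ring
    rw [hz1, this, ← Complex.ofReal_tsum, Complex.ofReal_re]
  -- partial sums tend to tsum
  have h2 : Tendsto (fun N : ℕ => ∑ k ∈ Finset.range N,
      ∫ x in (1/((k:ℝ)+2))..(1/((k:ℝ)+1)), x^p * (⌊1/x⌋:ℝ) * Int.fract (1/x)^p)
      atTop (𝓝 (∑' k : ℕ, f (k+2) / ((p:ℝ)+1))) := by
    apply (hf2.hasSum.tendsto_sum_nat).congr
    intro N
    apply Finset.sum_congr rfl
    intro k _
    rw [piece_h p k, hcast k]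
  have := tendsto_nhds_unique h h2
  rw [this, tsum_div_const, hT, hz]


lemma main_aux (k : ℕ) :
    ∫ x in (0:ℝ)..1, x^k * Int.fract (1/x)^(k+1)
      = (∑ i ∈ Finset.Icc 1 (k+1), (1:ℝ)/i) - Real.eulerMascheroniConstant
        - ∑ j ∈ Finset.Icc 1 k, (riemannZeta ((j:ℂ)+1)).re / ((j:ℝ)+1) := by
  induction k with
  | zero =>
    simp only [pow_zero, one_mul, pow_one, zero_add]
    rw [base_integral]
    norm_num
  | succ k ih =>
    have split : ∫ x in (0:ℝ)..1, x^(k+1) * Int.fract (1/x)^(k+1+1)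
        = (∫ x in (0:ℝ)..1, x^k * Int.fract (1/x)^(k+1))
          - ∫ x in (0:ℝ)..1, x^(k+1) * (⌊1/x⌋:ℝ) * Int.fract (1/x)^(k+1) := by
      rw [← intervalIntegral.integral_sub (intInt_g k (k+1)) (intInt_h (k+1) (by omega))]
      apply intervalIntegral.integral_congr
      intro x hx
      rw [Set.uIcc_of_le (by norm_num : (0:ℝ) ≤ 1)] at hx
      rcases eq_or_lt_of_le hx.1 with h0 | h0
      · rw [← h0]
        simp [zero_pow (Nat.succ_ne_zero k), zero_pow (Nat.succ_ne_zero (k+1))]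
      · have hfr : Int.fract (1/x) = 1/x - (⌊1/x⌋:ℝ) := rfl
        calc x^(k+1) * Int.fract (1/x)^(k+1+1)
            = x^(k+1) * Int.fract (1/x)^(k+1) * (1/x - (⌊1/x⌋:ℝ)) := by
              rw [← hfr, pow_succ]; ring
          _ = x^k * Int.fract (1/x)^(k+1)
              - x^(k+1) * (⌊1/x⌋:ℝ) * Int.fract (1/x)^(k+1) := by
              have hx0 : x ≠ 0 := h0.ne'
              field_simp
              ring
    rw [split, ih, J_integral (k+1) (by omega)]
    rw [Finset.sum_Icc_succ_top (by omega : 1 ≤ k+1+1) (fun i : ℕ => (1:ℝ)/i),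
      Finset.sum_Icc_succ_top (by omega : 1 ≤ k+1)
        (fun j : ℕ => (riemannZeta ((j:ℂ)+1)).re / ((j:ℝ)+1))]
    push_cast
    ring

theorem fractional_moment_pow_diag (m : ℕ) (hm : 1 ≤ m) :
    ∫ x in (0:ℝ)..1, x ^ (m - 1) * (Int.fract (1 / x)) ^ m =
      (∑ i ∈ Finset.Icc 1 m, (1 : ℝ) / i) - Real.eulerMascheroniConstant -
        ∑ j ∈ Finset.Icc 1 (m - 1), (riemannZeta ((j : ℂ) + 1)).re / ((j : ℝ) + 1) := by
  obtain ⟨k, rfl⟩ : ∃ k, m = k + 1 := ⟨m - 1, by omega⟩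
  simpa using main_aux k
end

section
/- For integers m ≥ 1 and m+1 ≤ j ≤ 2m, Σ_{k=j−m}^{m} ( (−1)^k / (m+k+1) ) · C(m,k) · C(m+k+1, j) = ( (−1)^m (1 + (−1)^j) / j ) · C(m, j−m−1). -/
open Finset Polynomial

lemma poly_key (m : ℕ) :
    ∑ k ∈ Finset.range (m+1), C ((-1:ℚ)^k * (m.choose k)) * (X + 1)^(m+k)
      = C ((-1:ℚ)^m) * (X^m * (X+1)^m) := by
  have hneg : ((-(X+1)) + 1 : ℚ[X]) = -X := by ring
  have h1 : (C ((-1:ℚ)^m) * X^m : ℚ[X]) = ((-(X+1)) + 1)^m := by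
    rw [hneg]
    rw [map_pow, map_neg, map_one, neg_pow (X : ℚ[X])]
  calc ∑ k ∈ Finset.range (m+1), C ((-1:ℚ)^k * (m.choose k)) * (X + 1)^(m+k)
      = (∑ k ∈ Finset.range (m+1), (-(X+1))^k * 1^(m-k) * (m.choose k : ℚ[X])) * (X+1)^m := by
        rw [Finset.sum_mul]
        refine Finset.sum_congr rfl fun k hk => ?_
        simp only [one_pow, C_mul, C_pow, C_neg, C_1, C_eq_natCast, neg_pow (X + 1 : ℚ[X]), pow_add]
        ring
    _ = C ((-1:ℚ)^m) * (X^m * (X+1)^m) := by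
        rw [← add_pow, ← h1, mul_assoc]

lemma key (m n : ℕ) (h : m ≤ n) :
    ∑ k ∈ Finset.range (m+1), (-1:ℚ)^k * (m.choose k) * ((m+k).choose n) =
      (-1:ℚ)^m * (m.choose (n-m)) := by
  have h2 : (X^m * (X+1)^m : ℚ[X]).coeff n = m.choose (n-m) := by
    conv_lhs => rw [show n = (n - m) + m from (Nat.sub_add_cancel h).symm]
    rw [coeff_X_pow_mul, coeff_X_add_one_pow]
  have := congrArg (fun p : ℚ[X] => p.coeff n) (poly_key m)
  simp only [finset_sum_coeff, coeff_C_mul, coeff_X_add_one_pow, h2] at this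
  rw [← this]

theorem alternating_sum_choose_identity (m j : ℕ) (hm : 1 ≤ m)
    (hj1 : m + 1 ≤ j) (hj2 : j ≤ 2 * m) :
    ∑ k ∈ Finset.Icc (j - m) m,
        ((-1 : ℚ) ^ k / (m + k + 1 : ℚ)) * (m.choose k : ℚ) * ((m + k + 1).choose j : ℚ) =
      ((-1 : ℚ) ^ m * (1 + (-1 : ℚ) ^ j) / (j : ℚ)) * (m.choose (j - m - 1) : ℚ) := by
  have hj0' : (0:ℚ) < (j:ℚ) := by exact_mod_cast (by omega : 0 < j)
  have hj0 : (j : ℚ) ≠ 0 := ne_of_gt hj0'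
  set f : ℕ → ℚ := fun k => (-1:ℚ)^k * (m.choose k) * ((m+k).choose (j-1)) with hf
  -- Step A : termwise rewriting
  have hterm : ∀ k : ℕ, ((-1:ℚ)^k / ((m:ℚ)+(k:ℚ)+1)) * ((m.choose k : ℕ) : ℚ) * (((m+k+1).choose j : ℕ) : ℚ) = f k / j := by
    intro k
    have hnat : (m+k+1) * (m+k).choose (j-1) = (m+k+1).choose j * j := by
      have := Nat.add_one_mul_choose_eq (m+k) (j-1)
      simpa [Nat.succ_eq_add_one, show j - 1 + 1 = j by omega] using this
    have hq : ((m:ℚ)+k+1) * (((m+k).choose (j-1) : ℕ) : ℚ) = (((m+k+1).choose j : ℕ) : ℚ) * (j:ℚ) := by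
      exact_mod_cast congrArg (Nat.cast : ℕ → ℚ) hnat
    have hmk : ((m:ℚ)+(k:ℚ)+1) ≠ 0 := by positivity
    rw [hf]
    simp only
    rw [eq_div_iff hj0]
    have hMinv : ((m:ℚ)+k+1) * ((m:ℚ)+k+1)⁻¹ = 1 := mul_inv_cancel₀ hmk
    linear_combination (-((-1:ℚ)^k * ((m.choose k : ℕ) : ℚ)) / ((m:ℚ)+k+1)) * hq
      + (((m.choose k : ℕ) : ℚ) * (((m+k).choose (j-1) : ℕ) : ℚ) * (-1:ℚ)^k) * hMinv
  rw [Finset.sum_congr rfl (fun k _ => hterm k), ← Finset.sum_div]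
  -- Step B : evaluate the sum
  have hsplit : ∑ k ∈ Finset.range (m+1), f k
      = (∑ k ∈ Finset.range (j-m), f k) + ∑ k ∈ Finset.Icc (j-m) m, f k := by
    rw [Finset.range_eq_Ico,
      ← Finset.sum_Ico_consecutive _ (Nat.zero_le _) (by omega : j - m ≤ m+1),
      Finset.Ico_add_one_right_eq_Icc, Finset.range_eq_Ico]
  have hlow : ∑ k ∈ Finset.range (j-m), f k = (-1:ℚ)^(j-m-1) * (m.choose (j-m-1)) := by
    rw [show j - m = (j-m-1)+1 by omega, Finset.sum_range_succ,
      Finset.sum_eq_zero, zero_add, hf]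
    · simp only
      rw [show m + (j-m-1) = j - 1 by omega, Nat.choose_self]
      push_cast
      ring
    · intro k hk
      have hk' : m + k < j - 1 := by
        simp only [Finset.mem_range] at hk; omega
      simp [hf, Nat.choose_eq_zero_of_lt hk']
  have hfull := key m (j-1) (by omega)
  rw [show j - 1 - m = j - m - 1 by omega] at hfull
  have hIcc : ∑ k ∈ Finset.Icc (j-m) m, f k
      = ((-1:ℚ)^m - (-1:ℚ)^(j-m-1)) * (m.choose (j-m-1)) := by
    have := hsplit
    rw [hfull, hlow] at this
    linarith [this]
  rw [hIcc]
  have hpow : (-1:ℚ)^(j-m-1) * (-1:ℚ)^(m+1) = (-1:ℚ)^j := by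
    rw [← pow_add, show j - m - 1 + (m+1) = j by omega]
  have hpow2 : ((-1:ℚ)^m)^2 = 1 := by
    rw [← pow_mul, pow_mul', neg_one_sq, one_pow]
  have hnum : (-1:ℚ)^m - (-1:ℚ)^(j-m-1) = (-1:ℚ)^m * (1 + (-1:ℚ)^j) := by
    rw [← hpow, pow_succ]
    linear_combination ((-1:ℚ)^(j-m-1)) * hpow2
  rw [hnum]
  ring
end

section
/- For every integer m ≥ 1 and every real x, x^m (1−x)^m = 1/( (2m+1)·C(2m,m) ) + (−1)^m Σ_{j=m+1}^{2m} ( (1 + (−1)^j)/j ) · C(m, j−m−1) · B_j(x), where B_j(x) is the j-th Bernoulli polynomial and C(a,b) the binomial coefficient. -/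
open Finset

private lemma keyK (m a : ℕ) : ∑ i ∈ range (m + 2), (-1 : ℝ) ^ i * ((m+1).choose i : ℝ) / (a + 1 + i)
        = (∑ i ∈ range (m + 1), (-1 : ℝ) ^ i * (m.choose i : ℝ) / (a + 1 + i))
          - ∑ i ∈ range (m + 1), (-1 : ℝ) ^ i * (m.choose i : ℝ) / ((a+1) + 1 + i) := by
  rw [Finset.sum_range_succ' _ (m+1), Finset.sum_range_succ' (fun i => (-1 : ℝ) ^ i * (m.choose i : ℝ) / (a + 1 + i)) m]
  push_cast
  have hsplit : ∀ i ∈ range (m+1), (-1 : ℝ) ^ (i+1) * ((m+1).choose (i+1) : ℝ) / ((a:ℝ) + 1 + ((i:ℝ)+1))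
      = (-((-1 : ℝ) ^ i * (m.choose i : ℝ) / ((a:ℝ) + 1 + 1 + i)))
        + (-((-1 : ℝ) ^ i * (m.choose (i+1) : ℝ) / ((a:ℝ) + 1 + 1 + i))) := by
    intro i _
    rw [Nat.choose_succ_succ]
    push_cast
    ring
  rw [Finset.sum_congr rfl hsplit, Finset.sum_add_distrib]
  have h2 : ∑ i ∈ range (m+1), (-((-1 : ℝ) ^ i * (m.choose (i+1) : ℝ) / ((a:ℝ) + 1 + 1 + i)))
      = ∑ i ∈ range m, ((-1 : ℝ) ^ (i+1) * (m.choose (i+1) : ℝ) / ((a:ℝ) + 1 + ((i:ℝ) + 1))) := by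
    rw [Finset.sum_range_succ, Nat.choose_succ_self]
    push_cast
    simp only [mul_zero, zero_div, add_zero, zero_mul, neg_zero]
    apply Finset.sum_congr rfl
    intro i _
    ring
  rw [h2, Finset.sum_neg_distrib]
  simp only [Nat.choose_zero_right]
  push_cast
  ring

private lemma sumA (m : ℕ) : ∀ a : ℕ, ∑ i ∈ range (m + 1), (-1 : ℝ) ^ i * (m.choose i : ℝ) / (a + 1 + i) =
    (m.factorial : ℝ) * (a.factorial : ℝ) / ((a + m + 1).factorial : ℝ) := by
  induction m with
  | zero =>
    intro a
    have : ((a+1).factorial : ℝ) = (a.factorial : ℝ) * (a + 1) := by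
      rw [Nat.factorial_succ]; push_cast; ring
    simp only [range_one, sum_singleton, pow_zero, Nat.choose_zero_right, Nat.cast_one,
      Nat.cast_zero, add_zero, zero_add, this]
    have hf : (a.factorial : ℝ) ≠ 0 := by positivity
    field_simp
    simp
  | succ m ih =>
    intro a
    have key := keyK m a
    push_cast at key ⊢
    rw [key, ih a]
    have iha := ih (a+1)
    push_cast at iha
    rw [iha]
    have h1 : ((a + (m+1) + 1).factorial : ℝ) = ((a + m + 1).factorial : ℝ) * ((a:ℝ) + m + 2) := by
      have : a + (m+1) + 1 = (a + m + 1) + 1 := by ring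
      rw [this, Nat.factorial_succ]; push_cast; ring
    have h2 : (((a+1) + m + 1).factorial : ℝ) = ((a + m + 1).factorial : ℝ) * ((a:ℝ) + m + 2) := by
      have : (a+1) + m + 1 = (a + m + 1) + 1 := by ring
      rw [this, Nat.factorial_succ]; push_cast; ring
    have h3 : ((a+1).factorial : ℝ) = (a.factorial : ℝ) * ((a:ℝ) + 1) := by
      rw [Nat.factorial_succ]; push_cast; ring
    have h4 : ((m+1).factorial : ℝ) = (m.factorial : ℝ) * ((m:ℝ) + 1) := by
      rw [Nat.factorial_succ]; push_cast; ring
    push_cast at h1 h2 h3 h4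
    rw [h1, h2, h3, h4]
    have hf : ((a + m + 1).factorial : ℝ) ≠ 0 := by positivity
    have hf2 : (a.factorial : ℝ) ≠ 0 := by positivity
    have hf3 : ((a:ℝ) + m + 2) ≠ 0 := by positivity
    push_cast at hf
    field_simp
    ring

private lemma periodic_poly_const (p : Polynomial ℝ) (h : ∀ x : ℝ, p.eval (x + 1) = p.eval x) :
    ∀ x : ℝ, p.eval x = p.eval 0 := by
  have hn : ∀ n : ℕ, p.eval (n : ℝ) = p.eval 0 := by
    intro n
    induction n with
    | zero => simp
    | succ n ih => rw [Nat.cast_succ, h, ih]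
  set q := p - Polynomial.C (p.eval 0) with hq
  have hroots : ∀ n : ℕ, q.IsRoot (n : ℝ) := by
    intro n
    simp [q, Polynomial.IsRoot, hn n]
  have hq0 : q = 0 := by
    apply Polynomial.eq_zero_of_infinite_isRoot
    apply Set.Infinite.mono (s := Set.range (fun n : ℕ => (n : ℝ)))
    · rintro x ⟨n, rfl⟩; exact hroots n
    · exact Set.infinite_range_of_injective Nat.cast_injective
  intro x
  have := congrArg (Polynomial.eval x) hq0
  simpa [q, sub_eq_zero] using this

private lemma integral_bernoulli_real (j : ℕ) (hj : 1 ≤ j) :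
    ∫ x in (0:ℝ)..1, (Polynomial.aeval x (Polynomial.bernoulli j) : ℝ) = 0 := by
  set Q : Polynomial ℝ := (Polynomial.bernoulli (j+1)).map (algebraMap ℚ ℝ) with hQ
  have hderiv : Q.derivative = Polynomial.C ((j:ℝ)+1) * (Polynomial.bernoulli j).map (algebraMap ℚ ℝ) := by
    rw [hQ, Polynomial.derivative_map, Polynomial.derivative_bernoulli_add_one, Polynomial.map_mul]
    congr 1
    simp [Polynomial.map_natCast]
  have haev : ∀ x : ℝ, Polynomial.aeval x (Polynomial.bernoulli j)
      = ((Polynomial.bernoulli j).map (algebraMap ℚ ℝ)).eval x := by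
    intro x
    rw [Polynomial.eval_map, Polynomial.aeval_def]
  have hftc : ∫ x in (0:ℝ)..1, Q.derivative.eval x = Q.eval 1 - Q.eval 0 := by
    exact intervalIntegral.integral_eq_sub_of_hasDerivAt (f := fun y => Q.eval y)
      (f' := fun y => Q.derivative.eval y) (fun x _ => Q.hasDerivAt x)
      ((Q.derivative.continuous).intervalIntegrable 0 1)
  have hvals : Q.eval 1 - Q.eval 0 = 0 := by
    rw [hQ]
    rw [Polynomial.eval_one_map, Polynomial.eval_zero_map]
    rw [Polynomial.bernoulli_eval_one, Polynomial.bernoulli_eval_zero,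
      bernoulli_eq_bernoulli'_of_ne_one (by omega)]
    simp
  have h2 : ∫ x in (0:ℝ)..1, Q.derivative.eval x
      = ((j:ℝ)+1) * ∫ x in (0:ℝ)..1, Polynomial.aeval x (Polynomial.bernoulli j) := by
    rw [← intervalIntegral.integral_const_mul]
    apply intervalIntegral.integral_congr
    intro x _
    simp only [hderiv, haev x, Polynomial.eval_mul, Polynomial.eval_C]
  have hj1 : ((j:ℝ)+1) ≠ 0 := by positivity
  rw [h2, hvals] at hftc
  exact (mul_eq_zero.mp hftc).resolve_left hj1

private lemma aeval_bernoulli_add_one (n : ℕ) (x : ℝ) :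
    Polynomial.aeval (x + 1) (Polynomial.bernoulli n)
      = Polynomial.aeval x (Polynomial.bernoulli n) + (n : ℝ) * x ^ (n - 1) := by
  have hpoly : (Polynomial.bernoulli n).comp (1 + Polynomial.X)
      = Polynomial.bernoulli n + Polynomial.C (n : ℚ) * Polynomial.X ^ (n - 1) := by
    apply Polynomial.funext
    intro y
    rw [Polynomial.eval_comp]
    simp [Polynomial.bernoulli_eval_one_add]
  have := congrArg (Polynomial.aeval x) hpoly
  rw [Polynomial.aeval_comp] at this
  simpa [add_comm] using this

private lemma one_sub_pow_expand (m : ℕ) (x : ℝ) :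
    (1 - x) ^ m = ∑ i ∈ range (m + 1), (-1 : ℝ) ^ i * x ^ i * (m.choose i : ℝ) := by
  have h : (1 : ℝ) - x = -x + 1 := by ring
  rw [h, add_pow]
  apply Finset.sum_congr rfl
  intro i _
  rw [neg_pow]
  ring

private lemma deltaD (m : ℕ) (x : ℝ) :
    (x + 1) ^ m * (-x) ^ m - x ^ m * (1 - x) ^ m
      = (-1 : ℝ) ^ m * ∑ i ∈ range m,
          (1 + (-1 : ℝ) ^ (m + 1 + i)) * (m.choose i : ℝ) * x ^ (m + i) := by
  have h1 : (x + 1) ^ m = ∑ i ∈ range (m + 1), x ^ i * (m.choose i : ℝ) := by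
    rw [add_pow]; simp
  have h2 := one_sub_pow_expand m x
  have hsq : ((-1 : ℝ) ^ m) * ((-1 : ℝ) ^ m) = 1 := by
    rw [← pow_add]
    exact Even.neg_one_pow ⟨m, rfl⟩
  have hL : (x + 1) ^ m * (-x) ^ m - x ^ m * (1 - x) ^ m
      = ∑ i ∈ range (m + 1), ((-1 : ℝ) ^ m - (-1 : ℝ) ^ i) * (m.choose i : ℝ) * x ^ (m + i) := by
    rw [h1, h2, Finset.sum_mul, Finset.mul_sum, ← Finset.sum_sub_distrib]
    apply Finset.sum_congr rfl
    intro i _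
    rw [neg_pow, pow_add]
    ring
  rw [hL, Finset.mul_sum, Finset.sum_range_succ, sub_self, zero_mul, zero_mul, add_zero]
  apply Finset.sum_congr rfl
  intro i _
  have hrw : m + 1 + i = (m + i) + 1 := by ring
  rw [hrw, pow_succ, pow_add]
  linear_combination ((-1 : ℝ) ^ i * (m.choose i : ℝ) * x ^ m * x ^ i) * hsq

theorem pow_mul_one_sub_pow_eq_bernoulli_expansion (m : ℕ) (hm : 1 ≤ m) (x : ℝ) :
    x ^ m * (1 - x) ^ m =
      1 / (((2 * m + 1 : ℕ) : ℝ) * ((2 * m).choose m : ℝ)) +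
        (-1 : ℝ) ^ m *
          ∑ j ∈ Finset.Icc (m + 1) (2 * m),
            ((1 + (-1 : ℝ) ^ j) / (j : ℝ)) * (m.choose (j - m - 1) : ℝ) *
              Polynomial.aeval x (Polynomial.bernoulli j) := by
  classical
  set c : ℝ := 1 / (((2 * m + 1 : ℕ) : ℝ) * ((2 * m).choose m : ℝ)) with hc
  set a : ℕ → ℝ := fun j => ((1 + (-1 : ℝ) ^ j) / (j : ℝ)) * (m.choose (j - m - 1) : ℝ) with ha
  set S : Polynomial ℝ := ∑ j ∈ Finset.Icc (m+1) (2*m),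
      Polynomial.C (a j) * (Polynomial.bernoulli j).map (algebraMap ℚ ℝ) with hS
  set p : Polynomial ℝ := Polynomial.X ^ m * (1 - Polynomial.X) ^ m - Polynomial.C c
      - Polynomial.C ((-1 : ℝ) ^ m) * S with hp
  have hev : ∀ y : ℝ, p.eval y = y ^ m * (1 - y) ^ m - c
      - (-1 : ℝ) ^ m * ∑ j ∈ Finset.Icc (m+1) (2*m),
          a j * Polynomial.aeval y (Polynomial.bernoulli j) := by
    intro y
    simp only [hp, hS, Polynomial.eval_sub, Polynomial.eval_mul, Polynomial.eval_pow,
      Polynomial.eval_C, Polynomial.eval_X, Polynomial.eval_one, Polynomial.eval_finset_sum,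
      Polynomial.eval_map, Polynomial.aeval_def, Finset.mul_sum]
  have hper : ∀ y : ℝ, p.eval (y + 1) = p.eval y := by
    intro y
    rw [hev, hev]
    have hterm : ∀ j ∈ Finset.Icc (m+1) (2*m),
        a j * Polynomial.aeval (y+1) (Polynomial.bernoulli j)
          = a j * Polynomial.aeval y (Polynomial.bernoulli j)
            + (1 + (-1:ℝ)^j) * (m.choose (j - m - 1) : ℝ) * y ^ (j - 1) := by
      intro j hj
      have hj1 : m + 1 ≤ j := (Finset.mem_Icc.mp hj).1
      have hjne : (j : ℝ) ≠ 0 := Nat.cast_ne_zero.mpr (by omega)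
      rw [aeval_bernoulli_add_one, mul_add, ha]
      congr 1
      field_simp
    have hshift : ∑ j ∈ Finset.Icc (m+1) (2*m), a j * Polynomial.aeval (y+1) (Polynomial.bernoulli j)
        = (∑ j ∈ Finset.Icc (m+1) (2*m), a j * Polynomial.aeval y (Polynomial.bernoulli j))
          + ∑ i ∈ range m, (1 + (-1:ℝ)^(m+1+i)) * (m.choose i : ℝ) * y ^ (m+i) := by
      rw [Finset.sum_congr rfl hterm, Finset.sum_add_distrib]
      congr 1
      rw [← Finset.Ico_add_one_right_eq_Icc, Finset.sum_Ico_eq_sum_range]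
      have hmm : 2*m + 1 - (m+1) = m := by omega
      rw [hmm]
      apply Finset.sum_congr rfl
      intro i _
      have e1 : m + 1 + i - m - 1 = i := by omega
      have e2 : m + 1 + i - 1 = m + i := by omega
      rw [e1, e2]
    rw [hshift]
    have hD := deltaD m y
    have hneg : (1:ℝ) - (y+1) = -y := by ring
    rw [hneg]
    linear_combination hD
  have hconst := periodic_poly_const p hper
  have hint1 : ∫ t in (0:ℝ)..1, p.eval t = p.eval 0 := by
    have : ∫ t in (0:ℝ)..1, p.eval t = ∫ t in (0:ℝ)..1, p.eval 0 :=
      intervalIntegral.integral_congr (fun t _ => hconst t)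
    rw [this]
    simp
  have hbeta : ∫ t in (0:ℝ)..1, t ^ m * (1 - t) ^ m = c := by
    have hexp : ∀ t : ℝ, t ^ m * (1 - t) ^ m
        = ∑ i ∈ range (m+1), (-1:ℝ)^i * (m.choose i : ℝ) * t ^ (m+i) := by
      intro t
      rw [one_sub_pow_expand, Finset.mul_sum]
      apply Finset.sum_congr rfl
      intro i _
      rw [pow_add]
      ring
    rw [intervalIntegral.integral_congr (fun t _ => hexp t)]
    rw [intervalIntegral.integral_finset_sum]
    swap
    · intro i _
      exact ((continuous_const.mul (continuous_pow (m+i))).intervalIntegrable 0 1)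
    have hterm : ∀ i ∈ range (m+1), (∫ t in (0:ℝ)..1, (-1:ℝ)^i * (m.choose i : ℝ) * t ^ (m+i))
        = (-1:ℝ)^i * (m.choose i : ℝ) / ((m:ℝ) + 1 + i) := by
      intro i _
      rw [intervalIntegral.integral_const_mul, integral_pow, one_pow,
        zero_pow (by omega : m + i + 1 ≠ 0)]
      push_cast
      ring
    rw [Finset.sum_congr rfl hterm, sumA m m]
    have hch := Nat.choose_mul_factorial_mul_factorial (Nat.le_mul_of_pos_left m (by norm_num) : m ≤ 2 * m)
    have h2m : 2 * m - m = m := by omega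
    rw [h2m] at hch
    have hfs : (m + m + 1).factorial = (2*m+1) * ((2*m).choose m * m.factorial * m.factorial) := by
      rw [hch]
      have : m + m + 1 = (2*m) + 1 := by omega
      rw [this, Nat.factorial_succ]
    rw [hc, hfs]
    have hne2 : (m.factorial : ℝ) ≠ 0 := by positivity
    push_cast
    have hne3 : ((2*m).choose m : ℝ) ≠ 0 := by
      have := Nat.choose_pos (show m ≤ 2*m by omega)
      positivity
    field_simp
  have hint2 : ∫ t in (0:ℝ)..1, p.eval t = 0 := by
    have hcont : Continuous fun t : ℝ => (-1:ℝ)^m * ∑ j ∈ Finset.Icc (m+1) (2*m),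
        a j * Polynomial.aeval t (Polynomial.bernoulli j) := by
      apply continuous_const.mul
      apply continuous_finset_sum
      intro j _
      exact continuous_const.mul (Polynomial.continuous_aeval _)
    rw [intervalIntegral.integral_congr (fun t _ => hev t)]
    rw [intervalIntegral.integral_sub, intervalIntegral.integral_sub]
    · rw [hbeta]
      rw [intervalIntegral.integral_const_mul]
      rw [intervalIntegral.integral_finset_sum]
      swap
      · intro j _
        exact (continuous_const.mul (Polynomial.continuous_aeval _)).intervalIntegrable 0 1
      have hz : ∀ j ∈ Finset.Icc (m+1) (2*m),
          (∫ t in (0:ℝ)..1, a j * Polynomial.aeval t (Polynomial.bernoulli j)) = 0 := by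
        intro j hj
        have hj1 : m + 1 ≤ j := (Finset.mem_Icc.mp hj).1
        rw [intervalIntegral.integral_const_mul, integral_bernoulli_real j (by omega), mul_zero]
      rw [Finset.sum_congr rfl hz, Finset.sum_const_zero]
      simp only [mul_zero, sub_zero, intervalIntegral.integral_const, smul_eq_mul, sub_self,
        sub_zero, one_mul]
    · exact ((continuous_pow m).mul ((continuous_const.sub continuous_id).pow m)).intervalIntegrable 0 1
    · exact intervalIntegrable_const
    · exact (((continuous_pow m).mul ((continuous_const.sub continuous_id).pow m)).sub continuous_const).intervalIntegrable 0 1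
    · exact hcont.intervalIntegrable 0 1
  have h0 : p.eval 0 = 0 := by rw [← hint1, hint2]
  have hx : p.eval x = 0 := (hconst x).trans h0
  rw [hev x] at hx
  linarith [hx]
end

section
/- For integers m ≥ 1 and k ≥ 2m, Σ_{j=m}^{2m} C(m, j−m) / C(k, j) = m! · (k−2m)! · (k+1) / (k+1−m)!. -/
lemma sum_choose_ratio_aux (k n : ℕ) : ∀ a : ℕ, a + n ≤ k →
    ∑ i ∈ Finset.range (n + 1), (n.choose i : ℚ) / (k.choose (a + i) : ℚ) =
      ((k : ℚ) + 1) * (Nat.factorial a : ℚ) * (Nat.factorial (k - a - n) : ℚ) /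
        (Nat.factorial (k - n + 1) : ℚ) := by
  induction n with
  | zero =>
    intro a ha
    simp only [Nat.add_zero] at ha ⊢
    rw [Finset.sum_range_one]
    simp only [Nat.choose_self, Nat.cast_one, Nat.add_zero, Nat.sub_zero]
    rw [Nat.cast_choose ℚ ha]
    have h1 : (Nat.factorial k : ℚ) ≠ 0 := by positivity
    have h2 : (Nat.factorial a : ℚ) ≠ 0 := by positivity
    have h3 : (Nat.factorial (k - a) : ℚ) ≠ 0 := by positivity
    rw [Nat.factorial_succ]
    push_cast
    field_simp
  | succ n ih =>
    intro a ha
    have ha1 : (a + 1) + n ≤ k := by omega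
    have ha0 : a + n ≤ k := by omega
    have h1 := ih (a + 1) ha1
    have h2 := ih a ha0
    have e2 : (∑ i ∈ Finset.range (n + 1), (n.choose (i + 1) : ℚ) / (k.choose (a + (i + 1)) : ℚ))
        + (n.choose 0 : ℚ) / (k.choose (a + 0) : ℚ) =
        ∑ i ∈ Finset.range (n + 1), (n.choose i : ℚ) / (k.choose (a + i) : ℚ) := by
      rw [← Finset.sum_range_succ' (fun i => (n.choose i : ℚ) / (k.choose (a + i) : ℚ)) (n + 1)]
      rw [Finset.sum_range_succ]
      simp [Nat.choose_succ_self]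
    have e1 : ∑ i ∈ Finset.range (n + 1 + 1), ((n + 1).choose i : ℚ) / (k.choose (a + i) : ℚ) =
        (∑ i ∈ Finset.range (n + 1), (n.choose i : ℚ) / (k.choose (a + 1 + i) : ℚ)) +
        (∑ i ∈ Finset.range (n + 1), (n.choose i : ℚ) / (k.choose (a + i) : ℚ)) := by
      rw [Finset.sum_range_succ'
        (fun i => ((n + 1).choose i : ℚ) / (k.choose (a + i) : ℚ)) (n + 1)]
      have step : ∀ i ∈ Finset.range (n + 1),
          ((n + 1).choose (i + 1) : ℚ) / (k.choose (a + (i + 1)) : ℚ) =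
          (n.choose i : ℚ) / (k.choose (a + 1 + i) : ℚ) +
          (n.choose (i + 1) : ℚ) / (k.choose (a + (i + 1)) : ℚ) := by
        intro i _
        have hx : a + (i + 1) = a + 1 + i := by omega
        rw [hx, Nat.choose_succ_succ]
        push_cast
        rw [add_div]
      rw [Finset.sum_congr rfl step, Finset.sum_add_distrib, add_assoc]
      congr 1
      rw [← e2]
      simp
    rw [e1, h1, h2]
    obtain ⟨d, hd⟩ := Nat.exists_eq_add_of_le ha
    have hd' : k = a + n + 1 + d := by omega
    subst hd'
    have r1 : a + n + 1 + d - (a + 1) - n = d := by omega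
    have r2 : a + n + 1 + d - n + 1 = a + d + 2 := by omega
    have r3 : a + n + 1 + d - a - n = d + 1 := by omega
    have r4 : a + n + 1 + d - a - (n + 1) = d := by omega
    have r5 : a + n + 1 + d - (n + 1) + 1 = a + d + 1 := by omega
    rw [r1, r2, r3, r4, r5]
    have f1 : Nat.factorial (a + d + 2) = (a + d + 2) * Nat.factorial (a + d + 1) :=
      Nat.factorial_succ _
    have f2 : Nat.factorial (d + 1) = (d + 1) * Nat.factorial d := Nat.factorial_succ _
    have f3 : Nat.factorial (a + 1) = (a + 1) * Nat.factorial a := Nat.factorial_succ _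
    rw [f1, f2, f3]
    have g1 : (Nat.factorial (a + d + 1) : ℚ) ≠ 0 := by positivity
    have g2 : (Nat.factorial a : ℚ) ≠ 0 := by positivity
    have g3 : (Nat.factorial d : ℚ) ≠ 0 := by positivity
    have g4 : ((a : ℚ) + d + 2) ≠ 0 := by positivity
    push_cast
    field_simp
    ring

theorem sum_choose_ratio_identity (m k : ℕ) (hm : 1 ≤ m) (hk : 2 * m ≤ k) :
    ∑ j ∈ Finset.Icc m (2 * m), (m.choose (j - m) : ℚ) / (k.choose j : ℚ) =
      (Nat.factorial m : ℚ) * (Nat.factorial (k - 2 * m) : ℚ) * ((k : ℚ) + 1) /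
        (Nat.factorial (k + 1 - m) : ℚ) := by
  have hmk : m + m ≤ k := by omega
  have e0 : ∑ j ∈ Finset.Icc m (2 * m), (m.choose (j - m) : ℚ) / (k.choose j : ℚ) =
      ∑ i ∈ Finset.range (m + 1), (m.choose i : ℚ) / (k.choose (m + i) : ℚ) := by
    rw [← Finset.Ico_add_one_right_eq_Icc, Finset.sum_Ico_eq_sum_range]
    apply Finset.sum_congr (by rw [show 2 * m + 1 - m = m + 1 from by omega])
    intro i _
    have : m + i - m = i := by omega
    rw [this]
  rw [e0, sum_choose_ratio_aux k m m hmk]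
  have r1 : k - m - m = k - 2 * m := by omega
  have r2 : k - m + 1 = k + 1 - m := by omega
  rw [r1, r2]
  ring
end
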